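/- arXiv:0905.2220 — 5 statements merged into one kernel-verified Lean document; each statement's English description precedes it below -/
import Mathlib

section
/- Let E be a countable set with Markov transition probabilities (p_{y,z}), x₀ ∈ E, and φ : E → ℝ≥0 a function with φ(x₀) = 0 that is harmonic at every point x ≠ x₀ (i.e. Σ_y p_{x,y} φ(y) = φ(x) for x ≠ x₀). For r ∈ (0,1) set ψ_r(x) = (r/(1-r))·(Σ_y p_{x₀,y} φ(y)) + φ(x). Then for every starting point x, the process M_n = ψ_r(X_n)·r^{L_{n-1}}, where L_{n-1} = Σ_{m=0}^{n-1} 1{X_m = x₀} is the local time at x₀ up to time n-1, is a martingale with respect to the natural filtration of the chain (X_n) started at x. -/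
open MeasureTheory Filter Topology

/-- Extension of a finite vector to a sequence, freezing at index `n`. -/
def stmt0Ext {E : Type*} (n : ℕ) (v : Fin (n + 1) → E) : ℕ → E :=
  fun i => v ⟨min i n, by omega⟩

/-- Append a value to a finite vector. -/
def stmt0Cons {E : Type*} (n : ℕ) (v : Fin (n + 1) → E) (z : E) : Fin (n + 2) → E :=
  fun j => if h : (j : ℕ) ≤ n then v ⟨j, by omega⟩ else z

lemma stmt0Ext_le {E : Type*} {n i : ℕ} (hi : i ≤ n) (v : Fin (n + 1) → E) :
    stmt0Ext n v i = v ⟨i, by omega⟩ := by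
  simp [stmt0Ext, Nat.min_eq_left hi]

lemma stmt0Ext_cons_le {E : Type*} {n i : ℕ} (hi : i ≤ n) (v : Fin (n + 1) → E) (z : E) :
    stmt0Ext (n + 1) (stmt0Cons n v z) i = stmt0Ext n v i := by
  rw [stmt0Ext_le (by omega), stmt0Ext_le hi, stmt0Cons]
  simp [hi]

lemma stmt0Ext_cons_top {E : Type*} (n : ℕ) (v : Fin (n + 1) → E) (z : E) :
    stmt0Ext (n + 1) (stmt0Cons n v z) (n + 1) = z := by
  rw [stmt0Ext_le le_rfl, stmt0Cons]
  simp

/-- The atom of the natural filtration determined by a finite vector of values. -/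
def stmt0Atom {E Ω : Type*} (X : ℕ → Ω → E) (n : ℕ) (v : Fin (n + 1) → E) : Set Ω :=
  {ω | ∀ i ≤ n, X i ω = stmt0Ext n v i}

/-- Local-time exponent determined by a vector. -/
def stmt0Cnt {E : Type*} [DecidableEq E] (x₀ : E) (n : ℕ) (v : Fin (n + 1) → E) : ℕ :=
  ∑ m ∈ Finset.range n, if stmt0Ext n v m = x₀ then 1 else 0

lemma stmt0Cnt_cons {E : Type*} [DecidableEq E] (x₀ : E) (n : ℕ) (v : Fin (n + 1) → E) (z : E) :
    stmt0Cnt x₀ (n + 1) (stmt0Cons n v z)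
      = stmt0Cnt x₀ n v + (if stmt0Ext n v n = x₀ then 1 else 0) := by
  rw [stmt0Cnt, Finset.sum_range_succ, stmt0Ext_cons_le le_rfl]
  congr 1
  exact Finset.sum_congr rfl fun m hm => by
    rw [stmt0Ext_cons_le (le_of_lt (Finset.mem_range.mp hm))]

/-- Sets in the natural filtration up to time `n` are invariant under agreement of the
first `n+1` coordinates. -/
lemma stmt0_invariant {E Ω : Type*} [MeasurableSpace E] (X : ℕ → Ω → E) (n : ℕ) (A : Set Ω)
    (hA : MeasurableSet[⨆ i ≤ n, MeasurableSpace.comap (X i) inferInstance] A) :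
    ∀ ω ∈ A, ∀ ω', (∀ i ≤ n, X i ω' = X i ω) → ω' ∈ A := by
  let m' : MeasurableSpace Ω :=
    { MeasurableSet' := fun A => ∀ ω ∈ A, ∀ ω', (∀ i ≤ n, X i ω' = X i ω) → ω' ∈ A
      measurableSet_empty := fun ω hω => absurd hω (Set.notMem_empty ω)
      measurableSet_compl := by
        intro A hA ω hω ω' hag hω'
        exact hω (hA ω' hω' ω fun i hi => (hag i hi).symm)
      measurableSet_iUnion := by
        intro f hf ω hω ω' hag
        obtain ⟨i, hi⟩ := Set.mem_iUnion.mp hω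
        exact Set.mem_iUnion.mpr ⟨i, hf i ω hi ω' hag⟩ }
  have hle : (⨆ i ≤ n, MeasurableSpace.comap (X i) inferInstance) ≤ m' := by
    refine iSup₂_le fun i hi => ?_
    rintro A ⟨S, -, rfl⟩
    intro ω hω ω' hag
    simpa [Set.mem_preimage, hag i hi] using hω
  exact hle A hA

/-- **Proposition 4.1.1.** For a recurrent Markov chain on a countable set `E` with
transition probabilities `p`, a point `x₀`, a nonnegative function `φ` vanishing at `x₀`
and harmonic off `x₀`, and `ψ_r(x) = (r/(1-r))·𝔼_{x₀}[φ(X₁)] + φ(x)`, the process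
`M_n = ψ_r(X_n)·r^{L_{n-1}^{x₀}}` is a martingale under `ℙ_x` for every starting point `x`. -/
theorem stmt0
    {E : Type*} [Countable E] [DecidableEq E] [MeasurableSpace E]
    [MeasurableSingletonClass E]
    {Ω : Type*} [m0 : MeasurableSpace Ω]
    (X : ℕ → Ω → E) (hXmeas : ∀ n, Measurable (X n))
    (ℙ : E → Measure Ω) (hprob : ∀ x, IsProbabilityMeasure (ℙ x))
    (p : E → E → ℝ) (hp0 : ∀ y z, 0 ≤ p y z) (hp1 : ∀ y, ∑' z, p y z = 1)
    (hfin : ∀ y, {z | p y z ≠ 0}.Finite)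
    -- the canonical Markov chain property: finite dimensional distributions
    (hchain : ∀ (x : E) (n : ℕ) (s : ℕ → E),
      (ℙ x) {ω | ∀ i ≤ n, X i ω = s i}
        = (if s 0 = x then 1 else 0) *
            ∏ i ∈ Finset.range n, ENNReal.ofReal (p (s i) (s (i + 1))))
    -- the natural filtration of the chain
    (𝓕 : Filtration ℕ m0)
    (h𝓕 : ∀ n, 𝓕 n = ⨆ i ≤ n, MeasurableSpace.comap (X i) inferInstance)
    (x₀ : E) (φ : E → ℝ) (hφ0 : ∀ y, 0 ≤ φ y) (hφx₀ : φ x₀ = 0)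
    (hharm : ∀ y, y ≠ x₀ → ∑' z, p y z * φ z = φ y)
    (r : ℝ) (hr0 : 0 < r) (hr1 : r < 1)
    (ψ : E → ℝ)
    (hψ : ∀ y, ψ y = r / (1 - r) * (∑' z, p x₀ z * φ z) + φ y)
    (x : E) :
    Martingale
      (fun n ω =>
        ψ (X n ω) * r ^ ∑ m ∈ Finset.range n, (if X m ω = x₀ then (1 : ℕ) else 0))
      𝓕 (ℙ x) := by
  classical
  haveI := hprob x
  set M : ℕ → Ω → ℝ := fun n ω =>
    ψ (X n ω) * r ^ ∑ m ∈ Finset.range n, (if X m ω = x₀ then (1 : ℕ) else 0) with hM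
  -- nonnegativity of ψ
  have hS0 : 0 ≤ ∑' z, p x₀ z * φ z :=
    tsum_nonneg fun z => mul_nonneg (hp0 _ _) (hφ0 _)
  have h1r : (0 : ℝ) < 1 - r := by linarith
  have hK0 : 0 ≤ r / (1 - r) * (∑' z, p x₀ z * φ z) :=
    mul_nonneg (div_nonneg hr0.le h1r.le) hS0
  have hψ0 : ∀ y, 0 ≤ ψ y := fun y => by
    rw [hψ y]; exact add_nonneg hK0 (hφ0 y)
  -- summability of transition-weighted sums
  have hsummable : ∀ (y : E) (f : E → ℝ), Summable fun z => p y z * f z := by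
    intro y f
    refine summable_of_finite_support ((hfin y).subset fun z hz => ?_)
    exact left_ne_zero_of_mul hz
  -- key harmonicity identity for ψ
  have hkey : ∀ y, r ^ (if y = x₀ then (1 : ℕ) else 0) * ∑' z, p y z * ψ z = ψ y := by
    intro y
    have hsplit : (∑' z, p y z * ψ z)
        = r / (1 - r) * (∑' z, p x₀ z * φ z) + ∑' z, p y z * φ z := by
      have h1 : (fun z => p y z * ψ z)
          = fun z => p y z * (r / (1 - r) * (∑' z, p x₀ z * φ z)) + p y z * φ z := by
        funext z; rw [hψ z]; ring
      rw [h1, Summable.tsum_add (hsummable y _) (hsummable y φ), tsum_mul_right, hp1, one_mul]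
    by_cases hy : y = x₀
    · subst hy
      rw [hsplit, if_pos rfl, pow_one, hψ, hφx₀, add_zero, div_mul_eq_mul_div,
        div_add' _ _ _ (ne_of_gt h1r), mul_div_assoc',
        div_eq_div_iff (ne_of_gt h1r) (ne_of_gt h1r)]
      ring
    · rw [hsplit, if_neg hy, pow_zero, one_mul, hharm y hy, hψ y]
  -- measurability
  have hXF : ∀ n i, i ≤ n → Measurable[𝓕 n] (X i) := by
    intro n i hi
    rw [measurable_iff_comap_le, h𝓕]
    exact le_iSup₂ (f := fun i (_ : i ≤ n) => MeasurableSpace.comap (X i) inferInstance) i hi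
  have hMF : ∀ n, Measurable[𝓕 n] (M n) := by
    intro n
    have h1 : Measurable[𝓕 n] fun ω => ψ (X n ω) :=
      (measurable_of_countable ψ).comp (hXF n n le_rfl)
    have h2 : Measurable[𝓕 n] fun ω =>
        (∑ m ∈ Finset.range n, if X m ω = x₀ then (1 : ℕ) else 0) :=
      Finset.measurable_sum _ fun m hm =>
        (measurable_of_countable fun y => if y = x₀ then (1 : ℕ) else 0).comp
          (hXF n m (Finset.mem_range.mp hm).le)
    have h3 : Measurable[𝓕 n] fun ω =>
        r ^ (∑ m ∈ Finset.range n, if X m ω = x₀ then (1 : ℕ) else 0) :=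
      (measurable_of_countable fun k : ℕ => r ^ k).comp h2
    exact h1.mul h3
  have hMmeas : ∀ n, Measurable (M n) := fun n => (hMF n).mono (𝓕.le n) le_rfl
  -- atoms
  have hatom_meas : ∀ n (v : Fin (n + 1) → E), MeasurableSet (stmt0Atom X n v) := by
    intro n v
    have h : stmt0Atom X n v = ⋂ i, ⋂ (_ : i ≤ n), X i ⁻¹' {stmt0Ext n v i} := by
      ext ω; simp [stmt0Atom, Set.mem_iInter]
    rw [h]
    exact MeasurableSet.iInter fun i => MeasurableSet.iInter fun _ =>
      hXmeas i (measurableSet_singleton _)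
  have hmem_self : ∀ (n : ℕ) (ω : Ω), ω ∈ stmt0Atom X n (fun j : Fin (n + 1) => X j ω) := by
    intro n ω i hi
    rw [stmt0Ext_le hi]
  have hatom_un : ∀ n, (⋃ v : Fin (n + 1) → E, stmt0Atom X n v) = Set.univ := by
    intro n
    refine Set.eq_univ_of_forall fun ω => Set.mem_iUnion.mpr ?_
    exact ⟨fun j : Fin (n + 1) => X j ω, hmem_self n ω⟩
  have hatom_dis : ∀ n, Pairwise (Function.onFun Disjoint
      fun v : Fin (n + 1) → E => stmt0Atom X n v) := by
    intro n v v' hvv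
    refine Set.disjoint_left.mpr fun ω hω hω' => hvv ?_
    funext j
    have h1 := hω j (by omega)
    have h2 := hω' j (by omega)
    rw [stmt0Ext_le (by omega)] at h1 h2
    rw [show (⟨(j : ℕ), by omega⟩ : Fin (n + 1)) = j from Fin.ext rfl] at h1 h2
    rw [← h1, ← h2]
  have hμatom : ∀ n (v : Fin (n + 1) → E), ℙ x (stmt0Atom X n v)
      = (if stmt0Ext n v 0 = x then 1 else 0) *
          ∏ i ∈ Finset.range n, ENNReal.ofReal (p (stmt0Ext n v i) (stmt0Ext n v (i + 1))) :=
    fun n v => hchain x n (stmt0Ext n v)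
  -- reachable sets and a.e. support
  let R : ℕ → Finset E := fun n =>
    Nat.rec {x} (fun _ Rk => Rk.biUnion fun y => (hfin y).toFinset) n
  have hgood : ∀ n (v : Fin (n + 1) → E), ℙ x (stmt0Atom X n v) ≠ 0 →
      ∀ i, i ≤ n → stmt0Ext n v i ∈ R i := by
    intro n v hv
    rw [hμatom] at hv
    have h0 : stmt0Ext n v 0 = x := by
      by_contra h
      rw [if_neg h, zero_mul] at hv
      exact hv rfl
    have hp' : ∀ i, i < n → p (stmt0Ext n v i) (stmt0Ext n v (i + 1)) ≠ 0 := by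
      intro i hi hpe
      apply hv
      rw [Finset.prod_eq_zero (Finset.mem_range.mpr hi) (by rw [hpe]; simp), mul_zero]
    intro i
    induction i with
    | zero => intro _; rw [h0]; exact Finset.mem_singleton_self x
    | succ k ih =>
      intro hk
      have hkR := ih (by omega)
      exact Finset.mem_biUnion.mpr ⟨_, hkR, (hfin _).mem_toFinset.mpr (hp' k (by omega))⟩
  have haeR : ∀ n, ∀ᵐ ω ∂ ℙ x, X n ω ∈ R n := by
    intro n
    rw [ae_iff]
    have hnull : ℙ x (⋃ v : {v : Fin (n + 1) → E // v ⟨n, by omega⟩ ∉ R n},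
        stmt0Atom X n v.1) = 0 := by
      refine measure_iUnion_null fun v => ?_
      by_contra h
      apply v.2
      have := hgood n v.1 h n le_rfl
      rwa [stmt0Ext_le le_rfl] at this
    refine measure_mono_null ?_ hnull
    intro ω hω
    exact Set.mem_iUnion.mpr ⟨⟨fun j : Fin (n + 1) => X j ω, hω⟩, hmem_self n ω⟩
  -- integrability
  have hbound : ∀ n, ∀ᵐ ω ∂ ℙ x, ‖M n ω‖ ≤ ∑ y ∈ R n, ψ y := by
    intro n
    filter_upwards [haeR n] with ω hω
    have h1 : ψ (X n ω) ≤ ∑ y ∈ R n, ψ y :=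
      Finset.single_le_sum (fun y _ => hψ0 y) hω
    rw [hM, Real.norm_eq_abs, abs_of_nonneg (mul_nonneg (hψ0 _) (pow_nonneg hr0.le _))]
    calc ψ (X n ω) * r ^ ∑ m ∈ Finset.range n, (if X m ω = x₀ then (1 : ℕ) else 0)
        ≤ ψ (X n ω) * 1 :=
          mul_le_mul_of_nonneg_left (pow_le_one₀ hr0.le hr1.le) (hψ0 _)
      _ ≤ ∑ y ∈ R n, ψ y := by rw [mul_one]; exact h1
  have hint : ∀ n, Integrable (M n) (ℙ x) := fun n =>
    Integrable.mono' (integrable_const _) (hMmeas n).aestronglyMeasurable (hbound n)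
  -- constancy: integral of M n over an atom of level n
  have key1 : ∀ n (v : Fin (n + 1) → E),
      ∫ ω in stmt0Atom X n v, M n ω ∂ ℙ x
        = (ℙ x (stmt0Atom X n v)).toReal * (ψ (stmt0Ext n v n) * r ^ stmt0Cnt x₀ n v) := by
    intro n v
    rw [setIntegral_congr_fun (hatom_meas n v)
      (g := fun _ => ψ (stmt0Ext n v n) * r ^ stmt0Cnt x₀ n v) ?_, setIntegral_const,
      smul_eq_mul]
    · rfl
    intro ω hω
    have hXn : X n ω = stmt0Ext n v n := hω n le_rfl
    have hsum : (∑ m ∈ Finset.range n, if X m ω = x₀ then (1 : ℕ) else 0) = stmt0Cnt x₀ n v :=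
      Finset.sum_congr rfl fun m hm => by rw [hω m (Finset.mem_range.mp hm).le]
    rw [hM]
    simp only [hXn, hsum]
  -- splitting an atom along the next step
  have hsplitatom : ∀ n (v : Fin (n + 1) → E),
      stmt0Atom X n v = ⋃ z : E, stmt0Atom X (n + 1) (stmt0Cons n v z) := by
    intro n v
    ext ω
    constructor
    · intro hω
      refine Set.mem_iUnion.mpr ⟨X (n + 1) ω, fun i hi => ?_⟩
      rcases Nat.lt_or_ge i (n + 1) with h | h
      · rw [stmt0Ext_cons_le (by omega)]; exact hω i (by omega)
      · have : i = n + 1 := by omega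
        subst this
        rw [stmt0Ext_cons_top]
    · intro hω
      obtain ⟨z, hz⟩ := Set.mem_iUnion.mp hω
      intro i hi
      rw [← stmt0Ext_cons_le hi v z]
      exact hz i (by omega)
  have hdis2 : ∀ n (v : Fin (n + 1) → E), Pairwise (Function.onFun Disjoint
      fun z : E => stmt0Atom X (n + 1) (stmt0Cons n v z)) := by
    intro n v z z' hzz
    refine Set.disjoint_left.mpr fun ω hω hω' => hzz ?_
    have h1 := hω (n + 1) le_rfl
    have h2 := hω' (n + 1) le_rfl
    rw [stmt0Ext_cons_top] at h1 h2
    rw [← h1, ← h2]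
  -- measure recursion
  have hrel : ∀ n (v : Fin (n + 1) → E) (z : E),
      ℙ x (stmt0Atom X (n + 1) (stmt0Cons n v z))
        = ℙ x (stmt0Atom X n v) * ENNReal.ofReal (p (stmt0Ext n v n) z) := by
    intro n v z
    rw [hμatom, hμatom, Finset.prod_range_succ]
    have e0 : stmt0Ext (n + 1) (stmt0Cons n v z) 0 = stmt0Ext n v 0 :=
      stmt0Ext_cons_le (by omega) v z
    have eProd : ∏ i ∈ Finset.range n, ENNReal.ofReal
          (p (stmt0Ext (n + 1) (stmt0Cons n v z) i) (stmt0Ext (n + 1) (stmt0Cons n v z) (i + 1)))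
        = ∏ i ∈ Finset.range n, ENNReal.ofReal (p (stmt0Ext n v i) (stmt0Ext n v (i + 1))) :=
      Finset.prod_congr rfl fun i hi => by
        rw [stmt0Ext_cons_le (Finset.mem_range.mp hi).le, stmt0Ext_cons_le (Finset.mem_range.mp hi)]
    rw [e0, eProd, stmt0Ext_cons_le le_rfl, stmt0Ext_cons_top, mul_assoc]
  -- integral of M (n+1) over an atom of level n
  have key2 : ∀ n (v : Fin (n + 1) → E),
      ∫ ω in stmt0Atom X n v, M (n + 1) ω ∂ ℙ x
        = (ℙ x (stmt0Atom X n v)).toReal * (ψ (stmt0Ext n v n) * r ^ stmt0Cnt x₀ n v) := by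
    intro n v
    conv_lhs => rw [hsplitatom n v]
    rw [integral_iUnion (fun z => hatom_meas (n + 1) (stmt0Cons n v z))
      (hdis2 n v) (hint (n + 1)).integrableOn]
    have hterm : ∀ z : E, ∫ ω in stmt0Atom X (n + 1) (stmt0Cons n v z), M (n + 1) ω ∂ ℙ x
        = ((ℙ x (stmt0Atom X n v)).toReal * (r ^ stmt0Cnt x₀ n v *
            r ^ (if stmt0Ext n v n = x₀ then (1 : ℕ) else 0))) * (p (stmt0Ext n v n) z * ψ z) := by
      intro z
      rw [key1 (n + 1) (stmt0Cons n v z), hrel, stmt0Cnt_cons, stmt0Ext_cons_top,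
        ENNReal.toReal_mul, ENNReal.toReal_ofReal (hp0 _ _), pow_add]
      ring
    calc (∑' z : E, ∫ ω in stmt0Atom X (n + 1) (stmt0Cons n v z), M (n + 1) ω ∂ ℙ x)
        = ∑' z : E, ((ℙ x (stmt0Atom X n v)).toReal * (r ^ stmt0Cnt x₀ n v *
            r ^ (if stmt0Ext n v n = x₀ then (1 : ℕ) else 0))) * (p (stmt0Ext n v n) z * ψ z) :=
          tsum_congr hterm
      _ = ((ℙ x (stmt0Atom X n v)).toReal * (r ^ stmt0Cnt x₀ n v *
            r ^ (if stmt0Ext n v n = x₀ then (1 : ℕ) else 0))) *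
              ∑' z : E, p (stmt0Ext n v n) z * ψ z := tsum_mul_left
      _ = (ℙ x (stmt0Atom X n v)).toReal * r ^ stmt0Cnt x₀ n v *
            (r ^ (if stmt0Ext n v n = x₀ then (1 : ℕ) else 0) *
              ∑' z : E, p (stmt0Ext n v n) z * ψ z) := by ring
      _ = (ℙ x (stmt0Atom X n v)).toReal * r ^ stmt0Cnt x₀ n v * ψ (stmt0Ext n v n) := by
          rw [hkey (stmt0Ext n v n)]
      _ = (ℙ x (stmt0Atom X n v)).toReal * (ψ (stmt0Ext n v n) * r ^ stmt0Cnt x₀ n v) := by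
          ring
  -- the set-integral equality on the filtration
  have hsetint : ∀ n (A : Set Ω), MeasurableSet[𝓕 n] A →
      ∫ ω in A, M n ω ∂ ℙ x = ∫ ω in A, M (n + 1) ω ∂ ℙ x := by
    intro n A hA
    have hAm : MeasurableSet A := 𝓕.le n A hA
    have hA' : MeasurableSet[⨆ i ≤ n, MeasurableSpace.comap (X i) inferInstance] A := by
      rw [← h𝓕 n]; exact hA
    have hinv := stmt0_invariant X n A hA'
    have hcover : A = ⋃ v : Fin (n + 1) → E, A ∩ stmt0Atom X n v := by
      rw [← Set.inter_iUnion, hatom_un, Set.inter_univ]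
    have hpiece : ∀ v : Fin (n + 1) → E,
        ∫ ω in A ∩ stmt0Atom X n v, M n ω ∂ ℙ x
          = ∫ ω in A ∩ stmt0Atom X n v, M (n + 1) ω ∂ ℙ x := by
      intro v
      by_cases hne : (A ∩ stmt0Atom X n v).Nonempty
      · obtain ⟨ω₀, hω₀⟩ := hne
        have heq : A ∩ stmt0Atom X n v = stmt0Atom X n v := by
          refine Set.Subset.antisymm Set.inter_subset_right fun ω' hω' => ⟨?_, hω'⟩
          exact hinv ω₀ hω₀.1 ω' fun i hi => (hω' i hi).trans (hω₀.2 i hi).symm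
        rw [heq, key1, key2]
      · rw [Set.not_nonempty_iff_eq_empty.mp hne]
        simp
    rw [hcover, integral_iUnion (fun v => hAm.inter (hatom_meas n v))
        ((hatom_dis n).mono fun v v' h => h.mono Set.inter_subset_right Set.inter_subset_right)
        (hint n).integrableOn,
      integral_iUnion (fun v => hAm.inter (hatom_meas n v))
        ((hatom_dis n).mono fun v v' h => h.mono Set.inter_subset_right Set.inter_subset_right)
        (hint (n + 1)).integrableOn]
    exact tsum_congr hpiece
  -- conclusion
  refine martingale_nat (fun n => (hMF n).stronglyMeasurable) hint fun n => ?_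
  haveI : SigmaFinite ((ℙ x).trim (𝓕.le n)) := by
    haveI : IsFiniteMeasure ((ℙ x).trim (𝓕.le n)) := isFiniteMeasure_trim _
    infer_instance
  exact ae_eq_condExp_of_forall_setIntegral_eq (𝓕.le n) (hint (n + 1))
    (fun s _ _ => (hint n).integrableOn)
    (fun s hs _ => hsetint n s hs)
    ((hMF n).stronglyMeasurable.aestronglyMeasurable)
end

section
/- Let E be a countable set with an irreducible recurrent Markov chain, y₀ ∈ E, and let φ₁, φ₂ : E → ℝ≥0 be two functions vanishing at y₀ and harmonic at every point ≠ y₀. If φ₁ ≃ φ₂ (they are asymptotically equivalent as φ₁ + φ₂ → ∞, in the sense that for every ε > 0 there is A with φ₁(x)+φ₂(x) ≥ A ⟹ |φ₁(x)/φ₂(x) − 1| ≤ ε), then φ₁ = φ₂. -/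
open MeasureTheory Filter Topology

namespace Stmt3Aux

variable {E : Type*} [DecidableEq E]

/-- sub-Markov kernel killed at `y₀`, iterated, as finitely supported measures -/
noncomputable def r (p : E → E → ℝ) (hfin : ∀ y, {z | p y z ≠ 0}.Finite) (y₀ x : E) :
    ℕ → E →₀ ℝ
  | 0 => Finsupp.single x 1
  | n+1 => (r p hfin y₀ x n).sum fun y c =>
      if y = y₀ then 0 else c • Finsupp.ofSupportFinite (p y) (hfin y)

variable {p : E → E → ℝ} {hfin : ∀ y, {z | p y z ≠ 0}.Finite} {y₀ x : E}

lemma r_succ_apply (n : ℕ) (z : E) :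
    r p hfin y₀ x (n+1) z
      = ∑ y ∈ (r p hfin y₀ x n).support,
          (if y = y₀ then 0 else r p hfin y₀ x n y * p y z) := by
  show ((r p hfin y₀ x n).sum fun y c =>
      if y = y₀ then 0 else c • Finsupp.ofSupportFinite (p y) (hfin y)) z = _
  rw [Finsupp.sum_apply]
  refine Finset.sum_congr rfl fun y _ => ?_
  simp only []
  rw [apply_ite (fun f : E →₀ ℝ => f z)]
  simp [Finsupp.ofSupportFinite_coe]
  rfl

lemma r_nonneg (hp0 : ∀ y z, 0 ≤ p y z) (n : ℕ) (z : E) : 0 ≤ r p hfin y₀ x n z := by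
  induction n generalizing z with
  | zero =>
    show (0:ℝ) ≤ Finsupp.single x 1 z
    rw [Finsupp.single_apply]; positivity
  | succ n ih =>
    rw [r_succ_apply]
    refine Finset.sum_nonneg fun y _ => ?_
    split
    · exact le_rfl
    · exact mul_nonneg (ih y) (hp0 y z)

end Stmt3Aux

namespace Stmt3Aux2
open Stmt3Aux
variable {E : Type*} [DecidableEq E]
variable {p : E → E → ℝ} {hfin : ∀ y, {z | p y z ≠ 0}.Finite} {y₀ x : E}

lemma mem_supp_succ (hp0 : ∀ y z, 0 ≤ p y z) {n : ℕ} {y z : E}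
    (hy : y ∈ (r p hfin y₀ x n).support) (hyy : y ≠ y₀) (hpz : p y z ≠ 0) :
    z ∈ (r p hfin y₀ x (n+1)).support := by
  rw [Finsupp.mem_support_iff]
  have hpos : 0 < r p hfin y₀ x n y * p y z :=
    mul_pos ((r_nonneg hp0 n y).lt_of_ne' (Finsupp.mem_support_iff.1 hy))
      ((hp0 y z).lt_of_ne' hpz)
  have : 0 < r p hfin y₀ x (n+1) z := by
    rw [r_succ_apply]
    refine Finset.sum_pos' (fun w _ => ?_) ⟨y, hy, ?_⟩
    · split
      · exact le_rfl
      · exact mul_nonneg (r_nonneg hp0 n w) (hp0 w z)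
    · rw [if_neg hyy]; exact hpos
  exact this.ne'

lemma sum_eq_tsum (hp0 : ∀ y z, 0 ≤ p y z) {n : ℕ} {y : E}
    (hy : y ∈ (r p hfin y₀ x n).support) (hyy : y ≠ y₀) (φ : E → ℝ) :
    ∑ z ∈ (r p hfin y₀ x (n+1)).support, p y z * φ z = ∑' z, p y z * φ z := by
  refine (tsum_eq_sum fun z hz => ?_).symm
  have : p y z = 0 := by
    by_contra h
    exact hz (mem_supp_succ hp0 hy hyy h)
  rw [this, zero_mul]

lemma W_invariant (hp0 : ∀ y z, 0 ≤ p y z) (φ : E → ℝ)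
    (hφy₀ : φ y₀ = 0) (hharm : ∀ y, y ≠ y₀ → ∑' z, p y z * φ z = φ y) (n : ℕ) :
    ∑ z ∈ (r p hfin y₀ x n).support, r p hfin y₀ x n z * φ z = φ x := by
  induction n with
  | zero =>
    show ∑ z ∈ (Finsupp.single x (1:ℝ)).support, (Finsupp.single x (1:ℝ)) z * φ z = φ x
    rw [Finsupp.support_single_ne_zero x one_ne_zero]
    simp
  | succ n ih =>
    calc ∑ z ∈ (r p hfin y₀ x (n+1)).support, r p hfin y₀ x (n+1) z * φ z
        = ∑ z ∈ (r p hfin y₀ x (n+1)).support, ∑ y ∈ (r p hfin y₀ x n).support,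
            (if y = y₀ then 0 else r p hfin y₀ x n y * p y z) * φ z := by
          refine Finset.sum_congr rfl fun z _ => ?_
          rw [r_succ_apply, Finset.sum_mul]
      _ = ∑ y ∈ (r p hfin y₀ x n).support, ∑ z ∈ (r p hfin y₀ x (n+1)).support,
            (if y = y₀ then 0 else r p hfin y₀ x n y * p y z) * φ z :=
          Finset.sum_comm
      _ = ∑ y ∈ (r p hfin y₀ x n).support, r p hfin y₀ x n y * φ y := by
          refine Finset.sum_congr rfl fun y hy => ?_
          by_cases hyy : y = y₀
          · simp [hyy, hφy₀]
          · simp only [if_neg hyy]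
            rw [show ∀ S : Finset E, ∑ z ∈ S, r p hfin y₀ x n y * p y z * φ z
                  = r p hfin y₀ x n y * ∑ z ∈ S, p y z * φ z from fun S => by
                rw [Finset.mul_sum]; exact Finset.sum_congr rfl fun z _ => by ring]
            rw [sum_eq_tsum hp0 hy hyy φ, hharm y hyy]
      _ = φ x := ih

end Stmt3Aux2

namespace Stmt3Aux3
open Stmt3Aux

/-- partition of a measurable set by the (countably many) values of a measurable map -/
lemma measure_partition {Ω : Type*} [MeasurableSpace Ω] {E : Type*} [Countable E]
    [MeasurableSpace E] [MeasurableSingletonClass E]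
    (μ : Measure Ω) (f : Ω → E) (hf : Measurable f) {S : Set Ω} (hS : MeasurableSet S) :
    μ S = ∑' y : E, μ (S ∩ f ⁻¹' {y}) := by
  have hU : S = ⋃ y : E, S ∩ f ⁻¹' {y} := by
    ext ω; simp
  conv_lhs => rw [hU]
  refine measure_iUnion ?_ fun y => hS.inter (hf (measurableSet_singleton y))
  intro a b hab
  simp only [Set.disjoint_left]
  rintro ω ⟨-, ha⟩ ⟨-, hb⟩
  exact hab (ha.symm.trans hb)

/-- the deterministic start-prepend of a path -/
def seq {E : Type*} (z : E) (t : ℕ → E) : ℕ → E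
  | 0 => z
  | j+1 => t j

variable {E : Type*} [Countable E] [DecidableEq E] [MeasurableSpace E]
    [MeasurableSingletonClass E]
    {Ω : Type*} [MeasurableSpace Ω]

lemma meas_event (X : ℕ → Ω → E) (hXmeas : ∀ n, Measurable (X n)) (y₀ : E)
    (n : ℕ) (z : E) (m : ℕ) (t : ℕ → E) :
    MeasurableSet {ω | X n ω = z ∧ (∀ i < n, X i ω ≠ y₀) ∧ ∀ j < m, X (n+1+j) ω = t j} := by
  have h1 : {ω | X n ω = z ∧ (∀ i < n, X i ω ≠ y₀) ∧ ∀ j < m, X (n+1+j) ω = t j}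
      = (X n ⁻¹' {z}) ∩ ((⋂ i, ⋂ _ : i < n, (X i ⁻¹' {y₀})ᶜ)
        ∩ ⋂ j, ⋂ _ : j < m, X (n+1+j) ⁻¹' {t j}) := by
    ext ω; simp [Set.mem_iInter]
  rw [h1]
  refine (hXmeas n (measurableSet_singleton z)).inter (MeasurableSet.inter ?_ ?_)
  · exact MeasurableSet.iInter fun i => MeasurableSet.iInter fun _ =>
      (hXmeas i (measurableSet_singleton y₀)).compl
  · exact MeasurableSet.iInter fun j => MeasurableSet.iInter fun _ =>
      hXmeas (n+1+j) (measurableSet_singleton (t j))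

end Stmt3Aux3

namespace Stmt3Aux4
open Stmt3Aux Stmt3Aux3

variable {E : Type*} [Countable E] [DecidableEq E] [MeasurableSpace E]
    [MeasurableSingletonClass E]
    {Ω : Type*} [MeasurableSpace Ω]

lemma key (X : ℕ → Ω → E) (hXmeas : ∀ n, Measurable (X n))
    (ℙ : E → Measure Ω)
    (p : E → E → ℝ) (hp0 : ∀ y z, 0 ≤ p y z) (hfin : ∀ y, {z | p y z ≠ 0}.Finite)
    (hchain : ∀ (x : E) (n : ℕ) (s : ℕ → E),
      (ℙ x) {ω | ∀ i ≤ n, X i ω = s i}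
        = (if s 0 = x then 1 else 0) *
            ∏ i ∈ Finset.range n, ENNReal.ofReal (p (s i) (s (i + 1))))
    (y₀ x : E) :
    ∀ (n : ℕ) (z : E) (m : ℕ) (t : ℕ → E),
      ℙ x {ω | X n ω = z ∧ (∀ i < n, X i ω ≠ y₀) ∧ ∀ j < m, X (n+1+j) ω = t j}
        = ENNReal.ofReal (r p hfin y₀ x n z)
          * ∏ j ∈ Finset.range m, ENNReal.ofReal (p (seq z t j) (seq z t (j+1))) := by
  intro n
  induction n with
  | zero =>
    intro z m t
    have hset : {ω | X 0 ω = z ∧ (∀ i < 0, X i ω ≠ y₀) ∧ ∀ j < m, X (0+1+j) ω = t j}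
        = {ω | ∀ i ≤ m, X i ω = seq z t i} := by
      ext ω
      simp only [Set.mem_setOf_eq, Nat.not_lt_zero]
      constructor
      · rintro ⟨h0, -, hs⟩ i hi
        match i with
        | 0 => exact h0
        | (j+1) =>
          have := hs j (by omega)
          rwa [show 0+1+j = j+1 by omega] at this
      · intro h
        refine ⟨h 0 (by omega), fun i hi => hi.elim, fun j hj => ?_⟩
        have := h (j+1) (by omega)
        rwa [show 0+1+j = j+1 by omega]
    rw [hset, hchain x m (seq z t)]
    congr 1
    show (if z = x then 1 else 0) = ENNReal.ofReal ((Finsupp.single x (1:ℝ)) z)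
    rw [Finsupp.single_apply]
    by_cases h : z = x
    · subst h; simp
    · rw [if_neg h, if_neg fun hh : x = z => h hh.symm]; simp
  | succ n ih =>
    intro z m t
    set T := ∏ j ∈ Finset.range m, ENNReal.ofReal (p (seq z t j) (seq z t (j+1))) with hT
    rw [measure_partition (ℙ x) (X n) (hXmeas n) (meas_event X hXmeas y₀ (n+1) z m t)]
    have hterm : ∀ y : E,
        (ℙ x) ({ω | X (n+1) ω = z ∧ (∀ i < n+1, X i ω ≠ y₀) ∧ ∀ j < m, X (n+1+1+j) ω = t j}
            ∩ X n ⁻¹' {y})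
          = (if y = y₀ then 0 else ENNReal.ofReal (r p hfin y₀ x n y * p y z)) * T := by
      intro y
      by_cases hyy : y = y₀
      · rw [if_pos hyy, zero_mul]
        have hempty : {ω | X (n+1) ω = z ∧ (∀ i < n+1, X i ω ≠ y₀) ∧
              ∀ j < m, X (n+1+1+j) ω = t j} ∩ X n ⁻¹' {y} = (∅ : Set Ω) := by
          ext ω
          simp only [Set.mem_inter_iff, Set.mem_setOf_eq, Set.mem_preimage,
            Set.mem_singleton_iff, Set.mem_empty_iff_false, iff_false, not_and]
          rintro ⟨-, havoid, -⟩ hXn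
          exact havoid n (by omega) (hXn.trans hyy)
        rw [hempty]
        exact measure_empty
      · rw [if_neg hyy]
        have hset : {ω | X (n+1) ω = z ∧ (∀ i < n+1, X i ω ≠ y₀) ∧ ∀ j < m, X (n+1+1+j) ω = t j}
              ∩ X n ⁻¹' {y}
            = {ω | X n ω = y ∧ (∀ i < n, X i ω ≠ y₀) ∧ ∀ j < m+1, X (n+1+j) ω = seq z t j} := by
          ext ω
          simp only [Set.mem_inter_iff, Set.mem_setOf_eq, Set.mem_preimage,
            Set.mem_singleton_iff]
          constructor
          · rintro ⟨⟨h1, havoid, hfut⟩, hXn⟩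
            refine ⟨hXn, fun i hi => havoid i (by omega), fun j hj => ?_⟩
            match j with
            | 0 => exact h1
            | (j+1) =>
              have := hfut j (by omega)
              rwa [show n+1+1+j = n+1+(j+1) by omega] at this
          · rintro ⟨hXn, havoid, hfut⟩
            refine ⟨⟨hfut 0 (by omega), fun i hi => ?_, fun j hj => ?_⟩, hXn⟩
            · rcases Nat.lt_or_ge i n with h | h
              · exact havoid i h
              · have : i = n := by omega
                rw [this, hXn]; exact hyy
            · have := hfut (j+1) (by omega)
              rwa [show n+1+(j+1) = n+1+1+j by omega] at this
        rw [hset, ih y (m+1) (seq z t), Finset.prod_range_succ']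
        have hf0 : ENNReal.ofReal (p (seq y (seq z t) 0) (seq y (seq z t) 1))
            = ENNReal.ofReal (p y z) := rfl
        have hfs : ∀ j, ENNReal.ofReal (p (seq y (seq z t) (j+1)) (seq y (seq z t) (j+1+1)))
            = ENNReal.ofReal (p (seq z t j) (seq z t (j+1))) := fun j => rfl
        rw [hf0]
        rw [Finset.prod_congr rfl fun j _ => hfs j]
        rw [ENNReal.ofReal_mul (r_nonneg hp0 n y)]
        ring
    rw [tsum_congr hterm, ENNReal.tsum_mul_right]
    congr 1
    rw [tsum_eq_sum (s := (r p hfin y₀ x n).support)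
      (fun y hy => by
        have : r p hfin y₀ x n y = 0 := Finsupp.notMem_support_iff.1 hy
        simp [this])]
    rw [r_succ_apply]
    rw [ENNReal.ofReal_sum_of_nonneg (fun y _ => by
      split
      · exact le_rfl
      · exact mul_nonneg (r_nonneg hp0 n y) (hp0 y z))]
    refine Finset.sum_congr rfl fun y _ => ?_
    split
    · simp
    · rfl

end Stmt3Aux4

namespace Stmt3Aux5
open Stmt3Aux Stmt3Aux3 Stmt3Aux4

variable {E : Type*} [Countable E] [DecidableEq E] [MeasurableSpace E]
    [MeasurableSingletonClass E]
    {Ω : Type*} [MeasurableSpace Ω]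

lemma mass (X : ℕ → Ω → E) (hXmeas : ∀ n, Measurable (X n))
    (ℙ : E → Measure Ω)
    (p : E → E → ℝ) (hp0 : ∀ y z, 0 ≤ p y z) (hfin : ∀ y, {z | p y z ≠ 0}.Finite)
    (hchain : ∀ (x : E) (n : ℕ) (s : ℕ → E),
      (ℙ x) {ω | ∀ i ≤ n, X i ω = s i}
        = (if s 0 = x then 1 else 0) *
            ∏ i ∈ Finset.range n, ENNReal.ofReal (p (s i) (s (i + 1))))
    (y₀ x : E) (n : ℕ) :
    ℙ x {ω | ∀ i < n, X i ω ≠ y₀}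
      = ENNReal.ofReal (∑ z ∈ (r p hfin y₀ x n).support, r p hfin y₀ x n z) := by
  have hBmeas : MeasurableSet {ω | ∀ i < n, X i ω ≠ y₀} := by
    have : {ω | ∀ i < n, X i ω ≠ y₀} = ⋂ i, ⋂ _ : i < n, (X i ⁻¹' {y₀})ᶜ := by
      ext ω; simp [Set.mem_iInter]
    rw [this]
    exact MeasurableSet.iInter fun i => MeasurableSet.iInter fun _ =>
      (hXmeas i (measurableSet_singleton y₀)).compl
  rw [measure_partition (ℙ x) (X n) (hXmeas n) hBmeas]
  have hterm : ∀ z : E, {ω | ∀ i < n, X i ω ≠ y₀} ∩ X n ⁻¹' {z}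
      = {ω | X n ω = z ∧ (∀ i < n, X i ω ≠ y₀) ∧ ∀ j < 0, X (n+1+j) ω = y₀} := by
    intro z
    ext ω
    simp only [Set.mem_inter_iff, Set.mem_setOf_eq, Set.mem_preimage, Set.mem_singleton_iff]
    constructor
    · rintro ⟨h1, h2⟩; exact ⟨h2, h1, fun j hj => absurd hj (Nat.not_lt_zero j)⟩
    · rintro ⟨h1, h2, -⟩; exact ⟨h2, h1⟩
  rw [tsum_congr fun z => by
    rw [hterm z, key X hXmeas ℙ p hp0 hfin hchain y₀ x n z 0 (fun _ => y₀)]]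
  rw [tsum_eq_sum (s := (r p hfin y₀ x n).support)
    (fun z hz => by simp [Finsupp.notMem_support_iff.1 hz]),
    ENNReal.ofReal_sum_of_nonneg (fun z _ => r_nonneg hp0 n z)]
  simp

lemma massTendsto (X : ℕ → Ω → E) (hXmeas : ∀ n, Measurable (X n))
    (ℙ : E → Measure Ω) (hprob : ∀ x, IsProbabilityMeasure (ℙ x))
    (p : E → E → ℝ) (hp0 : ∀ y z, 0 ≤ p y z) (hfin : ∀ y, {z | p y z ≠ 0}.Finite)
    (hchain : ∀ (x : E) (n : ℕ) (s : ℕ → E),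
      (ℙ x) {ω | ∀ i ≤ n, X i ω = s i}
        = (if s 0 = x then 1 else 0) *
            ∏ i ∈ Finset.range n, ENNReal.ofReal (p (s i) (s (i + 1))))
    (y₀ x : E)
    (hrec : ∀ᵐ ω ∂(ℙ x), ∃ n : ℕ, 0 < n ∧ X n ω = y₀) :
    Filter.Tendsto (fun n => ∑ z ∈ (r p hfin y₀ x n).support, r p hfin y₀ x n z)
      Filter.atTop (𝓝 0) := by
  set B : ℕ → Set Ω := fun n => {ω | ∀ i < n, X i ω ≠ y₀} with hB
  have hBmeas : ∀ n, MeasurableSet (B n) := by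
    intro n
    have : B n = ⋂ i, ⋂ _ : i < n, (X i ⁻¹' {y₀})ᶜ := by
      ext ω; simp [hB, Set.mem_iInter]
    rw [this]
    exact MeasurableSet.iInter fun i => MeasurableSet.iInter fun _ =>
      (hXmeas i (measurableSet_singleton y₀)).compl
  have hanti : Antitone B := by
    intro a b hab ω hω i hi
    exact hω i (lt_of_lt_of_le hi hab)
  have hInter : ℙ x (⋂ n, B n) = 0 := by
    refine measure_mono_null ?_ (ae_iff.1 hrec)
    intro ω hω
    simp only [Set.mem_setOf_eq, not_exists, not_and]
    intro nn hnn
    exact (Set.mem_iInter.1 hω (nn+1)) nn (by omega) 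
  have hμt : Filter.Tendsto (fun n => ℙ x (B n)) Filter.atTop (𝓝 0) := by
    have := MeasureTheory.tendsto_measure_iInter_atTop
      (μ := ℙ x) (s := B) (fun n => (hBmeas n).nullMeasurableSet) hanti
      ⟨0, measure_ne_top _ _⟩
    rw [hInter] at this
    exact this
  have hM : ∀ n, ∑ z ∈ (r p hfin y₀ x n).support, r p hfin y₀ x n z
      = (ℙ x (B n)).toReal := by
    intro n
    rw [mass X hXmeas ℙ p hp0 hfin hchain y₀ x n,
      ENNReal.toReal_ofReal (Finset.sum_nonneg fun z _ => r_nonneg hp0 n z)]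
  simp only [hM]
  have := (ENNReal.tendsto_toReal (a := 0) (by simp)).comp hμt
  simpa [Function.comp_def] using this

end Stmt3Aux5

lemma sum_split {E : Type*} (s : Finset E) (rr f g : E → ℝ) (P : E → Prop)
    [DecidablePred P] (c A : ℝ) (hrr : ∀ z, 0 ≤ rr z) (hf : ∀ z, 0 ≤ f z)
    (hg : ∀ z, 0 ≤ g z) (hc : 0 ≤ c) (hA : 0 ≤ A)
    (h1 : ∀ z, P z → f z ≤ c * g z) (h2 : ∀ z, ¬ P z → f z ≤ A) :
    ∑ z ∈ s, rr z * f z ≤ c * (∑ z ∈ s, rr z * g z) + (∑ z ∈ s, rr z) * A := by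
  rw [← Finset.sum_filter_add_sum_filter_not s P (fun z => rr z * f z)]
  have e1 : ∑ z ∈ s.filter P, rr z * f z ≤ c * ∑ z ∈ s, rr z * g z := by
    calc ∑ z ∈ s.filter P, rr z * f z
        ≤ ∑ z ∈ s.filter P, rr z * (c * g z) :=
          Finset.sum_le_sum fun z hz =>
            mul_le_mul_of_nonneg_left (h1 z (Finset.mem_filter.1 hz).2) (hrr z)
      _ ≤ ∑ z ∈ s, rr z * (c * g z) :=
          Finset.sum_le_sum_of_subset_of_nonneg (Finset.filter_subset _ _)
            (fun z _ _ => mul_nonneg (hrr z) (mul_nonneg hc (hg z)))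
      _ = c * ∑ z ∈ s, rr z * g z := by
          rw [Finset.mul_sum]; exact Finset.sum_congr rfl fun z _ => by ring
  have e2 : ∑ z ∈ s.filter (fun z => ¬ P z), rr z * f z ≤ (∑ z ∈ s, rr z) * A := by
    calc ∑ z ∈ s.filter (fun z => ¬ P z), rr z * f z
        ≤ ∑ z ∈ s.filter (fun z => ¬ P z), rr z * A :=
          Finset.sum_le_sum fun z hz =>
            mul_le_mul_of_nonneg_left (h2 z (Finset.mem_filter.1 hz).2) (hrr z)
      _ ≤ ∑ z ∈ s, rr z * A :=
          Finset.sum_le_sum_of_subset_of_nonneg (Finset.filter_subset _ _)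
            (fun z _ _ => mul_nonneg (hrr z) hA)
      _ = (∑ z ∈ s, rr z) * A := by rw [Finset.sum_mul]
  linarith

lemma real_squeeze {a b : ℝ} (hb : 0 ≤ b)
    (h : ∀ ε : ℝ, 0 < ε → ε ≤ 1/2 → a ≤ (1+ε)*b) : a ≤ b := by
  by_contra hlt
  push_neg at hlt
  have hεpos : 0 < min (1/2 : ℝ) ((a-b)/(2*(b+1))) :=
    lt_min (by norm_num) (div_pos (by linarith) (by linarith))
  have h1 := h _ hεpos (min_le_left _ _)
  have h2 : min (1/2 : ℝ) ((a-b)/(2*(b+1))) * b ≤ (a-b)/(2*(b+1)) * b :=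
    mul_le_mul_of_nonneg_right (min_le_right _ _) hb
  have h3 : (a-b)/(2*(b+1)) * b < a - b := by
    rw [div_mul_eq_mul_div, div_lt_iff₀ (by linarith)]
    nlinarith
  nlinarith


/-- **Lemma 4.2.8.** For an irreducible recurrent Markov chain on a countable set `E`,
two nonnegative functions `φ₁, φ₂` vanishing at a point `y₀`, harmonic at every other
point, and asymptotically equivalent as `φ₁ + φ₂ → ∞`, are equal. -/
theorem stmt3
    {E : Type*} [Countable E] [DecidableEq E] [MeasurableSpace E]
    [MeasurableSingletonClass E]
    {Ω : Type*} [MeasurableSpace Ω]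
    (X : ℕ → Ω → E) (hXmeas : ∀ n, Measurable (X n))
    (ℙ : E → Measure Ω) (hprob : ∀ x, IsProbabilityMeasure (ℙ x))
    (p : E → E → ℝ) (hp0 : ∀ y z, 0 ≤ p y z) (hp1 : ∀ y, ∑' z, p y z = 1)
    (hfin : ∀ y, {z | p y z ≠ 0}.Finite)
    -- the canonical Markov chain property: finite dimensional distributions
    (hchain : ∀ (x : E) (n : ℕ) (s : ℕ → E),
      (ℙ x) {ω | ∀ i ≤ n, X i ω = s i}
        = (if s 0 = x then 1 else 0) *
            ∏ i ∈ Finset.range n, ENNReal.ofReal (p (s i) (s (i + 1))))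
    -- irreducibility
    (hirr : ∀ x y : E, ∃ n : ℕ, 0 < (ℙ x) {ω | X n ω = y})
    (y₀ : E)
    -- recurrence: from any starting point, the chain hits `y₀` a.s.
    (hrec : ∀ x : E, ∀ᵐ ω ∂(ℙ x), ∃ n : ℕ, 0 < n ∧ X n ω = y₀)
    (φ₁ φ₂ : E → ℝ) (hφ₁0 : ∀ y, 0 ≤ φ₁ y) (hφ₂0 : ∀ y, 0 ≤ φ₂ y)
    (hφ₁y₀ : φ₁ y₀ = 0) (hφ₂y₀ : φ₂ y₀ = 0)
    (hharm₁ : ∀ y, y ≠ y₀ → ∑' z, p y z * φ₁ z = φ₁ y)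
    (hharm₂ : ∀ y, y ≠ y₀ → ∑' z, p y z * φ₂ z = φ₂ y)
    -- `φ₁ ≃ φ₂` : asymptotic equivalence as `φ₁ + φ₂ → ∞`
    (hequiv : ∀ ε : ℝ, 0 < ε → ∃ A : ℝ, 0 < A ∧
      ∀ x : E, A ≤ φ₁ x + φ₂ x → |φ₁ x / φ₂ x - 1| ≤ ε) :
    φ₁ = φ₂ := by
  classical
  funext x
  by_cases hx : x = y₀
  · rw [hx, hφ₁y₀, hφ₂y₀]
  -- the mass of the killed chain, and its limit
  set M : ℕ → ℝ := fun n =>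
    ∑ z ∈ (Stmt3Aux.r p hfin y₀ x n).support, Stmt3Aux.r p hfin y₀ x n z with hMdef
  have hMt : Filter.Tendsto M Filter.atTop (𝓝 0) :=
    Stmt3Aux5.massTendsto X hXmeas ℙ hprob p hp0 hfin hchain y₀ x (hrec x)
  have hMnn : ∀ n, ∀ z ∈ (Stmt3Aux.r p hfin y₀ x n).support,
      (0:ℝ) ≤ Stmt3Aux.r p hfin y₀ x n z := fun n z _ => Stmt3Aux.r_nonneg hp0 n z
  have hW1 : ∀ n, ∑ z ∈ (Stmt3Aux.r p hfin y₀ x n).support,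
      Stmt3Aux.r p hfin y₀ x n z * φ₁ z = φ₁ x :=
    Stmt3Aux2.W_invariant (x := x) hp0 φ₁ hφ₁y₀ hharm₁
  have hW2 : ∀ n, ∑ z ∈ (Stmt3Aux.r p hfin y₀ x n).support,
      Stmt3Aux.r p hfin y₀ x n z * φ₂ z = φ₂ x :=
    Stmt3Aux2.W_invariant (x := x) hp0 φ₂ hφ₂y₀ hharm₂
  have hineq : ∀ ε : ℝ, 0 < ε → ε ≤ 1/2 →
      φ₁ x ≤ (1+ε) * φ₂ x ∧ φ₂ x ≤ (1+2*ε) * φ₁ x := by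
    intro ε hε hε2
    obtain ⟨A, hA0, hA⟩ := hequiv ε hε
    have hcomp : ∀ z : E, A ≤ φ₁ z + φ₂ z →
        φ₁ z ≤ (1+ε) * φ₂ z ∧ φ₂ z ≤ (1+2*ε) * φ₁ z := by
      intro z hz
      have h := hA z hz
      have hφ₂pos : 0 < φ₂ z := by
        rcases (hφ₂0 z).lt_or_eq with h2 | h2
        · exact h2
        · exfalso
          rw [← h2, div_zero] at h
          rw [show |(0:ℝ) - 1| = 1 by norm_num] at h
          linarith
      have habs := abs_le.1 h
      have hdiv : φ₁ z = (φ₁ z / φ₂ z) * φ₂ z := by field_simp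
      constructor
      · rw [hdiv]
        have : φ₁ z / φ₂ z ≤ 1 + ε := by linarith [habs.2]
        nlinarith
      · have h1 : 1 - ε ≤ φ₁ z / φ₂ z := by linarith [habs.1]
        have h2 : (1-ε) * φ₂ z ≤ φ₁ z := by
          rw [hdiv]; nlinarith
        have h3 : (1+2*ε)*((1-ε)*φ₂ z) ≤ (1+2*ε)*φ₁ z :=
          mul_le_mul_of_nonneg_left h2 (by linarith)
        nlinarith [mul_nonneg (mul_nonneg hε.le (show (0:ℝ) ≤ 1-2*ε by linarith))
          hφ₂pos.le]
    -- the bound for each n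
    have hbound : ∀ n, φ₁ x ≤ (1+ε) * φ₂ x + M n * A ∧
        φ₂ x ≤ (1+2*ε) * φ₁ x + M n * A := by
      intro n
      have hrnn : ∀ z, (0:ℝ) ≤ Stmt3Aux.r p hfin y₀ x n z :=
        fun z => Stmt3Aux.r_nonneg hp0 n z
      constructor
      · have := sum_split (Stmt3Aux.r p hfin y₀ x n).support
          (fun z => Stmt3Aux.r p hfin y₀ x n z) φ₁ φ₂ (fun z => A ≤ φ₁ z + φ₂ z)
          (1+ε) A hrnn hφ₁0 hφ₂0 (by linarith) hA0.le
          (fun z hz => (hcomp z hz).1)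
          (fun z hz => by push_neg at hz; linarith [hφ₂0 z])
        rw [hW1 n, hW2 n] at this
        exact this
      · have := sum_split (Stmt3Aux.r p hfin y₀ x n).support
          (fun z => Stmt3Aux.r p hfin y₀ x n z) φ₂ φ₁ (fun z => A ≤ φ₁ z + φ₂ z)
          (1+2*ε) A hrnn hφ₂0 hφ₁0 (by linarith) hA0.le
          (fun z hz => (hcomp z hz).2)
          (fun z hz => by push_neg at hz; linarith [hφ₁0 z])
        rw [hW1 n, hW2 n] at this
        exact this
    constructor
    · have ht : Filter.Tendsto (fun n => (1+ε) * φ₂ x + M n * A) Filter.atTop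
          (𝓝 ((1+ε) * φ₂ x)) := by
        have := (hMt.mul_const A).const_add ((1+ε) * φ₂ x)
        simpa using this
      exact ge_of_tendsto' ht (fun n => (hbound n).1)
    · have ht : Filter.Tendsto (fun n => (1+2*ε) * φ₁ x + M n * A) Filter.atTop
          (𝓝 ((1+2*ε) * φ₁ x)) := by
        have := (hMt.mul_const A).const_add ((1+2*ε) * φ₁ x)
        simpa using this
      exact ge_of_tendsto' ht (fun n => (hbound n).2)
  refine le_antisymm ?_ ?_
  · exact real_squeeze (hφ₂0 x) (fun ε h1 h2 => (hineq ε h1 h2).1)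
  · refine real_squeeze (hφ₁0 x) (fun ε h1 h2 => ?_)
    have h := (hineq (ε/2) (by linarith) (by linarith)).2
    have e : 1+2*(ε/2) = 1+ε := by ring
    rwa [e] at h
end

section
/- For the simple symmetric random walk on ℤ² with transition probabilities 1/4 to each nearest neighbour, there exist a constant C > 0 and, for each (x,y) ∈ ℤ², a bounded error k ↦ ε_{(x,y)}(k) with sup_k k²·|ε_{(x,y)}(k)| < ∞, such that ℙ_{(x,y)}[X_k = (0,0)] = 1{k ≡ x+y (mod 2)}·C/(k+1) + ε_{(x,y)}(k). Consequently, the limit φ((x,y)) := lim_{N→∞} Σ_{k=0}^{N} [ℙ_{(0,0)}(X_k = (0,0)) − ℙ_{(x,y)}(X_k = (0,0))] exists, is nonnegative, and defines a function harmonic on ℤ² \ {(0,0)} vanishing at the origin (the discrete potential kernel). -/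
open Filter Topology

noncomputable def srwP : ℕ → ℤ × ℤ → ℝ
  | 0, z => if z = 0 then 1 else 0
  | n + 1, z =>
      (srwP n (z + (1, 0)) + srwP n (z - (1, 0)) +
        srwP n (z + (0, 1)) + srwP n (z - (0, 1))) / 4

noncomputable def qw : ℕ → ℤ → ℝ
  | 0, m => if m = 0 then 1 else 0
  | n + 1, m => (qw n (m + 1) + qw n (m - 1)) / 2

lemma qw_nonneg : ∀ k m, 0 ≤ qw k m := by
  intro k
  induction k with
  | zero => intro m; simp only [qw]; split <;> norm_num
  | succ n ih => intro m; simp only [qw]; have := ih (m+1); have := ih (m-1); linarith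

lemma qw_neg : ∀ k m, qw k (-m) = qw k m := by
  intro k
  induction k with
  | zero => intro m; simp [qw, neg_eq_zero]
  | succ n ih =>
      intro m
      show (qw n (-m + 1) + qw n (-m - 1)) / 2 = (qw n (m + 1) + qw n (m - 1)) / 2
      have h1 : -m + 1 = -(m - 1) := by ring
      have h2 : -m - 1 = -(m + 1) := by ring
      rw [h1, h2, ih, ih]; ring

lemma qw_zero_of_odd : ∀ (k : ℕ) (m : ℤ), (m + (k:ℤ)) % 2 ≠ 0 → qw k m = 0 := by
  intro k
  induction k with
  | zero => intro m hm; simp only [qw]; rw [if_neg]; omega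
  | succ n ih =>
      intro m hm
      show (qw n (m + 1) + qw n (m - 1)) / 2 = 0
      rw [ih (m+1) (by push_cast at hm ⊢; omega), ih (m-1) (by push_cast at hm ⊢; omega)]
      norm_num

lemma qw_choose : ∀ k (j : ℤ),
    qw k (2 * j - k) = if 0 ≤ j then ((k.choose j.toNat : ℕ) : ℝ) / 2 ^ k else 0 := by
  intro k
  induction k with
  | zero =>
      intro j
      simp only [qw, Nat.cast_zero, sub_zero, mul_eq_zero]
      rcases lt_trichotomy j 0 with h | h | h
      · rw [if_neg (by omega), if_neg (by omega)]
      · subst h; norm_num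
      · rw [if_neg (by omega), if_pos (by omega), Nat.choose_eq_zero_of_lt (by omega)]
        norm_num
  | succ n ih =>
      intro j
      show (qw n (2*j - (n+1:ℕ) + 1) + qw n (2*j - (n+1:ℕ) - 1)) / 2 = _
      have h1 : 2*j - ((n+1:ℕ):ℤ) + 1 = 2*j - n := by push_cast; ring
      have h2 : 2*j - ((n+1:ℕ):ℤ) - 1 = 2*(j-1) - n := by push_cast; ring
      rw [h1, h2, ih j, ih (j-1)]
      rcases lt_trichotomy j 0 with h | h | h
      · rw [if_neg (by omega), if_neg (by omega), if_neg (by omega)]; norm_num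
      · subst h
        rw [if_pos le_rfl, if_neg (by omega), if_pos le_rfl]
        simp [Nat.choose]
        rw [pow_succ]
        ring
      · rw [if_pos (by omega), if_pos (by omega), if_pos (by omega)]
        have ht : j.toNat = (j-1).toNat + 1 := by omega
        rw [ht, Nat.choose_succ_succ n ((j-1).toNat)]
        push_cast
        rw [pow_succ]
        field_simp
        ring

noncomputable def fc (n a : ℕ) : ℝ := ((2 * n).choose (n + a) : ℝ) / 4 ^ n
noncomputable def rc (n : ℕ) : ℝ := fc n 0

lemma qw_even (n a : ℕ) : qw (2 * n) (2 * a) = fc n a := by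
  have h := qw_choose (2 * n) ((n : ℤ) + a)
  have h1 : 2 * ((n:ℤ) + a) - (2*n:ℕ) = 2 * a := by push_cast; ring
  rw [h1] at h
  rw [h, if_pos (by positivity)]
  have h2 : ((n:ℤ) + a).toNat = n + a := by omega
  rw [h2, fc]
  rw [show (4:ℝ)^n = 2^(2*n) by rw [pow_mul]; norm_num]

lemma qw_even_int (n : ℕ) (s : ℤ) (hs : s % 2 = 0) :
    qw (2 * n) s = fc n (s / 2).natAbs := by
  obtain ⟨a, ha⟩ : ∃ a : ℕ, (s/2).natAbs = a := ⟨_, rfl⟩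
  rw [ha]
  rcases (by omega : s = 2 * (a : ℤ) ∨ s = -(2 * (a : ℤ))) with h | h
  · rw [h]; exact_mod_cast qw_even n a
  · rw [h, qw_neg]; exact_mod_cast qw_even n a

lemma srwP_eq : ∀ (k : ℕ) (z : ℤ × ℤ), srwP k z = qw k (z.1 + z.2) * qw k (z.1 - z.2) := by
  intro k
  induction k with
  | zero =>
      intro z
      simp only [srwP, qw]
      rcases eq_or_ne z 0 with h | h
      · subst h; norm_num
      · rw [if_neg h]
        have : ¬(z.1 + z.2 = 0 ∧ z.1 - z.2 = 0) := by
          intro ⟨h1, h2⟩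
          apply h
          have h3 : z.1 = 0 := by omega
          have h4 : z.2 = 0 := by omega
          rw [Prod.ext_iff, h3, h4]
          simp
        by_cases h1 : z.1 + z.2 = 0
        · rw [if_pos h1, if_neg (by tauto)]; ring
        · rw [if_neg h1]; ring
  | succ n ih =>
      intro z
      show (srwP n (z + (1, 0)) + srwP n (z - (1, 0)) + srwP n (z + (0, 1)) + srwP n (z - (0, 1))) / 4
          = (qw n (z.1 + z.2 + 1) + qw n (z.1 + z.2 - 1)) / 2 *
            ((qw n (z.1 - z.2 + 1) + qw n (z.1 - z.2 - 1)) / 2)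
      rw [ih, ih, ih, ih]
      simp only [Prod.fst_add, Prod.snd_add, Prod.fst_sub, Prod.snd_sub]
      norm_num
      ring_nf

lemma fc_nonneg (n a : ℕ) : 0 ≤ fc n a := by unfold fc; positivity

lemma fc_le_rc (n a : ℕ) : fc n a ≤ rc n := by
  unfold rc fc
  have h := Nat.choose_le_middle (n + a) (2 * n)
  rw [show 2 * n / 2 = n + 0 by omega] at h
  gcongr


lemma rc_nonneg (n : ℕ) : 0 ≤ rc n := fc_nonneg n 0

lemma fc_step (n a : ℕ) (h : a ≤ n) :
    fc n (a + 1) * ((n : ℝ) + a + 1) = fc n a * ((n : ℝ) - a) := by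
  have key := Nat.choose_succ_right_eq (2 * n) (n + a)
  have h2 : 2 * n - (n + a) = n - a := by omega
  rw [h2] at key
  unfold fc
  rw [show n + (a + 1) = n + a + 1 by ring]
  have : (((2 * n).choose (n + a + 1) : ℕ) : ℝ) * ((n : ℝ) + a + 1)
      = (((2 * n).choose (n + a) : ℕ) : ℝ) * (((n - a : ℕ) : ℕ) : ℝ) := by exact_mod_cast key
  push_cast [Nat.cast_sub h] at this
  field_simp
  linarith

lemma fc_eq_zero (n a : ℕ) (h : n < a) : fc n a = 0 := by
  unfold fc
  rw [Nat.choose_eq_zero_of_lt (by omega)]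
  norm_num

lemma fc_diff_le (n a : ℕ) (hn : 1 ≤ n) :
    fc n a - fc n (a + 1) ≤ rc n * (2 * a + 1) / n := by
  have hrc := rc_nonneg n
  have hfa := fc_le_rc n a
  have hfa1 := fc_nonneg n (a + 1)
  have hn' : (1:ℝ) ≤ (n:ℝ) := by exact_mod_cast hn
  by_cases hc : n ≤ 2 * a + 1
  · have h1 : (n:ℝ) ≤ 2 * a + 1 := by exact_mod_cast hc
    rw [div_eq_mul_inv, mul_assoc]
    have : (1:ℝ) ≤ (2 * a + 1) * (n:ℝ)⁻¹ := by
      rw [le_mul_inv_iff₀ (by linarith)]; linarith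
    nlinarith
  · have ha : a ≤ n := by omega
    have key := fc_step n a ha
    have hna : (0:ℝ) < (n:ℝ) + a + 1 := by positivity
    have hd : fc n a - fc n (a + 1) = fc n a * (2 * a + 1) / ((n:ℝ) + a + 1) := by
      field_simp
      nlinarith [key]
    rw [hd]
    rw [div_le_div_iff₀ hna (by linarith)]
    have e0 : (0:ℝ) ≤ rc n * (2 * a + 1) := by positivity
    have e1 := mul_le_mul_of_nonneg_right hfa
      (show (0:ℝ) ≤ (2 * (a:ℝ) + 1) * (n:ℝ) by positivity)
    have e2 : rc n * (2 * a + 1) * n ≤ rc n * (2 * a + 1) * ((n:ℝ) + a + 1) := by nlinarith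
    nlinarith [e1, e2]

lemma rc_sub_fc (n : ℕ) (hn : 1 ≤ n) : ∀ a : ℕ, rc n - fc n a ≤ rc n * a ^ 2 / n := by
  intro a
  induction a with
  | zero => simp [rc]
  | succ a ih =>
      have h1 := fc_diff_le n a hn
      have hn' : (0:ℝ) < (n:ℝ) := by exact_mod_cast hn
      have : rc n - fc n (a + 1) = (rc n - fc n a) + (fc n a - fc n (a + 1)) := by ring
      rw [this]
      have : rc n * (a:ℝ)^2 / n + rc n * (2 * a + 1) / n = rc n * ((a:ℝ)+1)^2 / n := by
        field_simp; ring
      push_cast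
      push_cast at ih h1
      linarith

lemma prod_bound (n a b : ℕ) (hn : 1 ≤ n) :
    rc n ^ 2 - rc n ^ 2 * ((a:ℝ) ^ 2 + (b:ℝ) ^ 2) / n ≤ fc n a * fc n b ∧
    fc n a * fc n b ≤ rc n ^ 2 := by
  have h1 := rc_sub_fc n hn a
  have h2 := rc_sub_fc n hn b
  have ha := fc_le_rc n a
  have hb := fc_le_rc n b
  have ha0 := fc_nonneg n a
  have hb0 := fc_nonneg n b
  have hrc := rc_nonneg n
  have hn' : (0:ℝ) < (n:ℝ) := by exact_mod_cast hn
  constructor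
  · have e1 : rc n * a^2 / n + rc n * b^2 / n = rc n * ((a:ℝ)^2 + (b:ℝ)^2) / n := by
      field_simp
    have k1 : rc n ^2 - fc n a * fc n b = rc n * (rc n - fc n a) + fc n a * (rc n - fc n b) := by
      ring
    have k2 : fc n a * (rc n - fc n b) ≤ rc n * (rc n - fc n b) := by nlinarith
    have k3 : rc n * (rc n - fc n a) ≤ rc n * (rc n * a^2 / n) := by nlinarith
    have k4 : rc n * (rc n - fc n b) ≤ rc n * (rc n * b^2 / n) := by nlinarith
    have : rc n * (rc n * a^2/n) + rc n * (rc n * b^2/n) = rc n ^2 * ((a:ℝ)^2 + (b:ℝ)^2)/n := by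
      field_simp
    nlinarith
  · nlinarith

open Real.Wallis in
lemma rc_sq_W : ∀ n : ℕ, rc n ^ 2 * (2 * (n:ℝ) + 1) * W n = 1 := by
  intro n
  induction n with
  | zero =>
      simp [rc, fc, W]
  | succ n ih =>
      have hcb := Nat.succ_mul_centralBinom_succ n
      have hc : Nat.centralBinom n = (2 * n).choose n := rfl
      have hc1 : Nat.centralBinom (n + 1) = (2 * (n + 1)).choose (n + 1) := rfl
      rw [hc, hc1] at hcb
      have hcast : ((n:ℝ) + 1) * ((2 * (n + 1)).choose (n + 1) : ℝ)
          = 2 * (2 * n + 1) * ((2 * n).choose n : ℝ) := by exact_mod_cast hcb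
      have hrc : rc (n + 1) * (2 * (n:ℝ) + 2) = rc n * (2 * (n:ℝ) + 1) := by
        unfold rc fc
        rw [show n + 1 + 0 = n + 1 by ring, show n + 0 = n by ring]
        rw [show (4:ℝ) ^ (n + 1) = 4 ^ n * 4 by ring]
        field_simp
        linear_combination 2 * hcast
      rw [W_succ]
      have hW : 0 < W n := W_pos n
      have h1 : (0:ℝ) < 2 * (n:ℝ) + 1 := by positivity
      have h2 : (0:ℝ) < 2 * (n:ℝ) + 2 := by positivity
      have h3 : (0:ℝ) < 2 * (n:ℝ) + 3 := by positivity
      have expand : rc (n+1) ^ 2 * (2 * ((n:ℕ):ℝ) + 1 + 2) *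
          (W n * ((2 * n + 2) / (2 * n + 1) * ((2 * n + 2) / (2 * n + 3))))
          = (rc (n+1) * (2 * (n:ℝ) + 2)) ^ 2 * (2 * (n:ℝ) + 1) * W n
            * ((2 * (n:ℝ) + 3) / (2 * (n:ℝ) + 3)) / ((2 * (n:ℝ) + 1) ^ 2) := by
        push_cast
        field_simp
        ring
      push_cast
      push_cast at expand
      rw [show (2 * ((n:ℝ) + 1) + 1) = 2 * (n:ℝ) + 1 + 2 by ring]
      rw [expand, hrc, div_self (ne_of_gt h3)]
      field_simp
      nlinarith [ih]

open Real.Wallis in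
lemma W_ge (n : ℕ) : (3:ℝ)/4 ≤ W n := by
  have h := le_W n
  have hpi := Real.pi_gt_three
  have h1 : (0:ℝ) < 2 * (n:ℝ) + 2 := by positivity
  have h2 : (1:ℝ)/2 ≤ (2 * (n:ℝ) + 1) / (2 * (n:ℝ) + 2) := by
    rw [div_le_div_iff₀ (by norm_num) h1]; linarith
  nlinarith

open Real.Wallis in
lemma W_gap (n : ℕ) : Real.pi / 2 - W n ≤ (Real.pi / 2) / (2 * (n:ℝ) + 2) := by
  have h := le_W n
  have hpi := Real.pi_pos
  have h1 : (0:ℝ) < 2 * (n:ℝ) + 2 := by positivity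
  have e : (2*(n:ℝ)+1)/(2*(n:ℝ)+2)*(Real.pi/2) = Real.pi/2 - (Real.pi/2)/(2*(n:ℝ)+2) := by
    field_simp; ring
  rw [e] at h
  linarith

lemma rc_sq_le (n : ℕ) : rc n ^ 2 ≤ 2 / (2 * (n:ℝ) + 1) := by
  have hid := rc_sq_W n
  have hW := W_ge n
  have h1 : (0:ℝ) < 2 * (n:ℝ) + 1 := by positivity
  have hr2 : 0 ≤ rc n ^ 2 := sq_nonneg _
  rw [div_eq_mul_inv, le_mul_inv_iff₀ h1] -- 2/(2n+1) : rc^2 * (2n+1) ≤ 2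
  nlinarith

lemma rc_asymp (n : ℕ) :
    0 ≤ rc n ^ 2 - (2 / Real.pi) / (2 * (n:ℝ) + 1) ∧
    rc n ^ 2 - (2 / Real.pi) / (2 * (n:ℝ) + 1) ≤ 1 / ((n:ℝ) + 1) ^ 2 := by
  have hid := rc_sq_W n
  have hW := W_ge n
  have hWle := Real.Wallis.W_le n
  have hgap := W_gap n
  have hpi := Real.pi_gt_three
  have hpi0 := Real.pi_pos
  have h1 : (0:ℝ) < 2 * (n:ℝ) + 1 := by positivity
  have h2 : (0:ℝ) < 2 * (n:ℝ) + 2 := by positivity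
  have hWpos : (0:ℝ) < Real.Wallis.W n := by linarith
  -- rc^2 = 1 / ((2n+1) W n)
  have hrc : rc n ^ 2 = 1 / ((2 * (n:ℝ) + 1) * Real.Wallis.W n) := by
    field_simp
    nlinarith [hid]
  have hdiff : rc n ^ 2 - (2 / Real.pi) / (2 * (n:ℝ) + 1)
      = (Real.pi - 2 * Real.Wallis.W n) / ((2 * (n:ℝ) + 1) * Real.pi * Real.Wallis.W n) := by
    rw [hrc]
    field_simp
  rw [hdiff]
  have hnum0 : 0 ≤ Real.pi - 2 * Real.Wallis.W n := by linarith
  have hden : (0:ℝ) < (2 * (n:ℝ) + 1) * Real.pi * Real.Wallis.W n := by positivity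
  constructor
  · positivity
  · rw [div_le_div_iff₀ hden (by positivity)]
    -- numerator ≤ pi/(n+1); denominator ≥ (2n+1)*pi*(3/4)
    have hnum : Real.pi - 2 * Real.Wallis.W n ≤ Real.pi / ((n:ℝ) + 1) := by
      have : (Real.pi / 2) / (2 * (n:ℝ) + 2) = (Real.pi / ((n:ℝ)+1)) / 4 := by
        rw [div_div, div_div]; congr 1; ring
      nlinarith [hgap]
    rcases Nat.eq_zero_or_pos n with rfl | hn
    · have hpi4 := Real.pi_lt_d2
      push_cast
      nlinarith [mul_le_mul_of_nonneg_left hW (le_of_lt hpi0)]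
    · have hn1 : (1:ℝ) ≤ (n:ℝ) := by exact_mod_cast hn
      have key : Real.pi / ((n:ℝ) + 1) * ((n:ℝ)+1)^2 ≤ (2 * (n:ℝ) + 1) * Real.pi * (3/4) := by
        rw [show Real.pi / ((n:ℝ)+1) * ((n:ℝ)+1)^2 = Real.pi * ((n:ℝ)+1) by field_simp]
        nlinarith
      nlinarith [mul_le_mul_of_nonneg_right hnum (show (0:ℝ) ≤ ((n:ℝ)+1)^2 by positivity),
        mul_le_mul_of_nonneg_left (show Real.Wallis.W n ≥ 3/4 from hW)
          (show (0:ℝ) ≤ (Real.pi - 2*Real.Wallis.W n) by linarith)]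

lemma srwP_even_zero (n : ℕ) (z : ℤ × ℤ) (h : (z.1 + z.2) % 2 ≠ 0) : srwP (2 * n) z = 0 := by
  rw [srwP_eq, qw_zero_of_odd (2*n) _ (by push_cast; omega), zero_mul]

lemma srwP_odd_zero (n : ℕ) (z : ℤ × ℤ) (h : (z.1 + z.2) % 2 = 0) : srwP (2 * n + 1) z = 0 := by
  rw [srwP_eq, qw_zero_of_odd (2*n+1) _ (by push_cast; omega), zero_mul]

lemma srwP_even_eq (n : ℕ) (z : ℤ × ℤ) (h : (z.1 + z.2) % 2 = 0) :
    srwP (2 * n) z = fc n ((z.1 + z.2) / 2).natAbs * fc n ((z.1 - z.2) / 2).natAbs := by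
  rw [srwP_eq, qw_even_int n _ h, qw_even_int n _ (by omega)]

lemma srwP_origin (n : ℕ) : srwP (2 * n) 0 = rc n ^ 2 := by
  have h := srwP_even_eq n 0 (by norm_num)
  norm_num at h
  rw [h, rc, sq]

lemma srwP_nonneg (k : ℕ) (z : ℤ × ℤ) : 0 ≤ srwP k z := by
  rw [srwP_eq]; exact mul_nonneg (qw_nonneg _ _) (qw_nonneg _ _)

lemma qw_le_rc_even (n : ℕ) (m : ℤ) : qw (2 * n) m ≤ rc n := by
  by_cases h : m % 2 = 0
  · rw [qw_even_int n m h]; exact fc_le_rc _ _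
  · rw [qw_zero_of_odd (2*n) m (by push_cast; omega)]; exact rc_nonneg n

lemma qw_le_rc_odd (n : ℕ) (m : ℤ) : qw (2 * n + 1) m ≤ rc n := by
  show (qw (2*n) (m+1) + qw (2*n) (m-1)) / 2 ≤ rc n
  have h1 := qw_le_rc_even n (m+1)
  have h2 := qw_le_rc_even n (m-1)
  linarith

lemma srwP_le (k : ℕ) (z : ℤ × ℤ) : srwP k z ≤ 4 / ((k:ℝ) + 1) := by
  have key : ∀ n m m', qw (2*n) m * qw (2*n) m' ≤ 2 / (2*(n:ℝ)+1) ∧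
      qw (2*n+1) m * qw (2*n+1) m' ≤ 2 / (2*(n:ℝ)+1) := by
    intro n m m'
    have h2 := rc_sq_le n
    have hr := rc_nonneg n
    constructor
    · calc qw (2*n) m * qw (2*n) m' ≤ rc n * rc n :=
            mul_le_mul (qw_le_rc_even n m) (qw_le_rc_even n m') (qw_nonneg _ _) hr
        _ ≤ 2 / (2*(n:ℝ)+1) := by nlinarith
    · calc qw (2*n+1) m * qw (2*n+1) m' ≤ rc n * rc n :=
            mul_le_mul (qw_le_rc_odd n m) (qw_le_rc_odd n m') (qw_nonneg _ _) hr
        _ ≤ 2 / (2*(n:ℝ)+1) := by nlinarith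
  rcases Nat.even_or_odd k with ⟨n, hk⟩ | ⟨n, hk⟩
  · subst hk
    rw [srwP_eq, show n + n = 2 * n by ring]
    refine le_trans (key n _ _).1 ?_
    rw [div_le_div_iff₀ (by positivity) (by push_cast; positivity)]
    push_cast
    nlinarith
  · subst hk
    rw [srwP_eq]
    refine le_trans (key n _ _).2 ?_
    rw [div_le_div_iff₀ (by positivity) (by push_cast; positivity)]
    push_cast
    nlinarith

lemma est_even (z : ℤ × ℤ) (h : (z.1 + z.2) % 2 = 0) :
    ∃ B : ℝ, 0 ≤ B ∧ ∀ n : ℕ,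
      ((n:ℝ)) ^ 2 * |srwP (2 * n) z - (2 / Real.pi) / (2 * (n:ℝ) + 1)| ≤ B := by
  set a := ((z.1 + z.2) / 2).natAbs with ha
  set b := ((z.1 - z.2) / 2).natAbs with hb
  refine ⟨(a:ℝ)^2 + (b:ℝ)^2 + 1, by positivity, ?_⟩
  intro n
  rcases Nat.eq_zero_or_pos n with rfl | hn
  · norm_num
    positivity
  have hn' : (1:ℝ) ≤ (n:ℝ) := by exact_mod_cast hn
  rw [srwP_even_eq n z h]
  obtain ⟨hlo, hhi⟩ := prod_bound n a b hn
  obtain ⟨hlo2, hhi2⟩ := rc_asymp n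
  set X := fc n a * fc n b - 2 / Real.pi / (2 * (n:ℝ) + 1) with hX
  have habs : |X| ≤ rc n ^ 2 * ((a:ℝ)^2 + (b:ℝ)^2) / n + 1 / ((n:ℝ)+1)^2 := by
    rw [abs_le]
    constructor
    · have : (0:ℝ) ≤ 1 / ((n:ℝ)+1)^2 := by positivity
      simp only [hX]
      linarith
    · simp only [hX]
      have : (0:ℝ) ≤ rc n ^2 * ((a:ℝ)^2+(b:ℝ)^2)/n := by positivity
      linarith
  have e5 : (n:ℝ)^2 * (rc n ^2 * ((a:ℝ)^2 + (b:ℝ)^2) / n + 1/((n:ℝ)+1)^2)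
      = ((n:ℝ) * rc n ^2) * ((a:ℝ)^2 + (b:ℝ)^2) + (n:ℝ)^2/((n:ℝ)+1)^2 := by
    field_simp
  have e6 : (n:ℝ) * rc n ^ 2 ≤ 1 := by
    have := rc_sq_le n
    have h7 : (n:ℝ) * (2 / (2*(n:ℝ)+1)) ≤ 1 := by
      rw [← mul_div_assoc, div_le_one (by positivity)]
      linarith
    nlinarith
  have e7 : (n:ℝ)^2 / ((n:ℝ)+1)^2 ≤ 1 := by
    rw [div_le_one (by positivity)]
    nlinarith
  calc (n:ℝ)^2 * |X| ≤ (n:ℝ)^2 * (rc n ^2 * ((a:ℝ)^2 + (b:ℝ)^2)/n + 1/((n:ℝ)+1)^2) := by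
        have : (0:ℝ) ≤ (n:ℝ)^2 := by positivity
        exact mul_le_mul_of_nonneg_left habs this
    _ = ((n:ℝ) * rc n ^2) * ((a:ℝ)^2 + (b:ℝ)^2) + (n:ℝ)^2/((n:ℝ)+1)^2 := e5
    _ ≤ (a:ℝ)^2 + (b:ℝ)^2 + 1 := by
          have hab : (0:ℝ) ≤ (a:ℝ)^2 + (b:ℝ)^2 := by positivity
          have := mul_le_mul_of_nonneg_right e6 hab
          linarith

lemma est_odd (z : ℤ × ℤ) (h : (z.1 + z.2) % 2 ≠ 0) :
    ∃ B : ℝ, 0 ≤ B ∧ ∀ n : ℕ,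
      ((n:ℝ)) ^ 2 * |srwP (2 * n + 1) z - (2 / Real.pi) / (2 * (n:ℝ) + 2)| ≤ B := by
  obtain ⟨B1, hB1, h1⟩ := est_even (z + (1, 0)) (by simp; omega)
  obtain ⟨B2, hB2, h2⟩ := est_even (z - (1, 0)) (by simp; omega)
  obtain ⟨B3, hB3, h3⟩ := est_even (z + (0, 1)) (by simp; omega)
  obtain ⟨B4, hB4, h4⟩ := est_even (z - (0, 1)) (by simp; omega)
  refine ⟨(B1 + B2 + B3 + B4) / 4 + 1, by positivity, ?_⟩
  intro n
  have hpi := Real.pi_gt_three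
  have hpi0 := Real.pi_pos
  set C : ℝ := 2 / Real.pi with hC
  have hC0 : 0 < C := by positivity
  have hC1 : C ≤ 1 := by rw [hC, div_le_one hpi0]; linarith
  have hrec : srwP (2 * n + 1) z =
      (srwP (2*n) (z + (1, 0)) + srwP (2*n) (z - (1, 0)) +
        srwP (2*n) (z + (0, 1)) + srwP (2*n) (z - (0, 1))) / 4 := rfl
  set e1 := srwP (2*n) (z + (1, 0)) - C / (2 * (n:ℝ) + 1) with he1
  set e2 := srwP (2*n) (z - (1, 0)) - C / (2 * (n:ℝ) + 1) with he2
  set e3 := srwP (2*n) (z + (0, 1)) - C / (2 * (n:ℝ) + 1) with he3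
  set e4 := srwP (2*n) (z - (0, 1)) - C / (2 * (n:ℝ) + 1) with he4
  have hd1 : (0:ℝ) < 2 * (n:ℝ) + 1 := by positivity
  have hd2 : (0:ℝ) < 2 * (n:ℝ) + 2 := by positivity
  set δ := C / (2 * (n:ℝ) + 1) - C / (2 * (n:ℝ) + 2) with hδ
  have hXeq : srwP (2 * n + 1) z - C / (2 * (n:ℝ) + 2) = (e1 + e2 + e3 + e4) / 4 + δ := by
    rw [hrec, he1, he2, he3, he4, hδ]
    ring
  have habs : |srwP (2 * n + 1) z - C / (2 * (n:ℝ) + 2)|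
      ≤ (|e1| + |e2| + |e3| + |e4|) / 4 + |δ| := by
    rw [hXeq]
    refine le_trans (abs_add_le _ _) ?_
    have : |(e1 + e2 + e3 + e4) / 4| ≤ (|e1| + |e2| + |e3| + |e4|) / 4 := by
      rw [abs_div, abs_of_nonneg (by norm_num : (0:ℝ) ≤ 4)]
      gcongr
      have t1 := abs_add_le (e1+e2+e3) e4
      have t2 := abs_add_le (e1+e2) e3
      have t3 := abs_add_le e1 e2
      linarith
    linarith
  have hδval : δ = C / ((2 * (n:ℝ) + 1) * (2 * (n:ℝ) + 2)) := by
    rw [hδ]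
    field_simp
    ring
  have hδnn : 0 ≤ δ := by rw [hδval]; positivity
  have hδbd : (n:ℝ)^2 * |δ| ≤ 1 := by
    rw [abs_of_nonneg hδnn, hδval, ← mul_div_assoc, div_le_one (by positivity)]
    nlinarith [mul_le_mul_of_nonneg_left hC1 (sq_nonneg (n:ℝ)), sq_nonneg (n:ℝ),
      show (0:ℝ) ≤ (n:ℝ) from Nat.cast_nonneg n]
  calc (n:ℝ)^2 * |srwP (2 * n + 1) z - C / (2 * (n:ℝ) + 2)|
      ≤ (n:ℝ)^2 * ((|e1| + |e2| + |e3| + |e4|) / 4 + |δ|) :=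
        mul_le_mul_of_nonneg_left habs (sq_nonneg _)
    _ = ((n:ℝ)^2 * |e1| + (n:ℝ)^2 * |e2| + (n:ℝ)^2 * |e3| + (n:ℝ)^2 * |e4|) / 4
        + (n:ℝ)^2 * |δ| := by ring
    _ ≤ (B1 + B2 + B3 + B4) / 4 + 1 := by
        have := h1 n; have := h2 n; have := h3 n; have := h4 n
        linarith

lemma part1 (z : ℤ × ℤ) : ∃ B : ℝ, ∀ k : ℕ,
    (k : ℝ) ^ 2 *
        |srwP k z - (if ((k : ℤ) - (z.1 + z.2)) % 2 = 0 then (2 / Real.pi) / (k + 1) else 0)|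
      ≤ B := by
  by_cases h : (z.1 + z.2) % 2 = 0
  · obtain ⟨B, hB0, hB⟩ := est_even z h
    refine ⟨4 * B, ?_⟩
    intro k
    rcases Nat.even_or_odd k with ⟨n, hk⟩ | ⟨n, hk⟩
    · subst hk
      rw [show n + n = 2 * n by ring, if_pos (by push_cast; omega)]
      have hBn := hB n
      push_cast
      have e : (2*(n:ℝ))^2 * |srwP (2*n) z - 2/Real.pi/(2*(n:ℝ)+1)|
          = 4 * ((n:ℝ)^2 * |srwP (2*n) z - 2/Real.pi/(2*(n:ℝ)+1)|) := by ring
      rw [e]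
      linarith
    · subst hk
      rw [if_neg (by push_cast; omega), srwP_odd_zero n z h]
      simp
      linarith
  · obtain ⟨B, hB0, hB⟩ := est_odd z h
    refine ⟨9 * B + 5, ?_⟩
    intro k
    have hpi := Real.pi_gt_three
    have hpi0 := Real.pi_pos
    rcases Nat.even_or_odd k with ⟨n, hk⟩ | ⟨n, hk⟩
    · subst hk
      rw [show n + n = 2 * n by ring, if_neg (by push_cast; omega), srwP_even_zero n z h]
      simp
      linarith
    · subst hk
      rw [if_pos (by push_cast; omega)]
      have hBn := hB n
      have hd2 : (0:ℝ) < 2 * (n:ℝ) + 2 := by positivity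
      have hs := srwP_le (2*n+1) z
      have hs0 := srwP_nonneg (2*n+1) z
      have hCb : (2/Real.pi) / (2*(n:ℝ)+2) ≤ 1 := by
        rw [div_le_one hd2]
        have : 2/Real.pi ≤ 1 := by rw [div_le_one hpi0]; linarith
        linarith
      have hCb0 : 0 < (2/Real.pi) / (2*(n:ℝ)+2) := by positivity
      have hsle : srwP (2*n+1) z ≤ 4 := by
        refine le_trans hs ?_
        rw [div_le_iff₀ (by positivity)]
        push_cast
        nlinarith [Nat.cast_nonneg (α := ℝ) n]
      set X := srwP (2*n+1) z - 2/Real.pi/(2*(n:ℝ)+2) with hX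
      have habs5 : |X| ≤ 5 := by
        rw [abs_le]
        constructor <;> [skip; skip] <;> simp only [hX] <;> linarith
      have hcast : ((2*n+1:ℕ):ℝ) = 2*(n:ℝ)+1 := by push_cast; ring
      rw [hcast]
      have hXg : srwP (2*n+1) z - 2/Real.pi/(((2:ℝ)*n+1)+1) = X := by
        rw [hX]; ring_nf
      rw [hXg]
      rcases Nat.eq_zero_or_pos n with rfl | hn
      · norm_num
        linarith [habs5, hB0, hBn]
      · have hn1 : (1:ℝ) ≤ (n:ℝ) := by exact_mod_cast hn
        have e : (2*(n:ℝ)+1)^2*|X| ≤ 9*((n:ℝ)^2*|X|) + |X| := by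
          nlinarith [abs_nonneg X, mul_nonneg (mul_nonneg (show (0:ℝ) ≤ (n:ℝ) by linarith)
            (show (0:ℝ) ≤ 5*(n:ℝ)-4 by linarith)) (abs_nonneg X)]
        linarith [hBn, habs5]

lemma fc_mul_le (n a b : ℕ) : fc n a * fc n b ≤ rc n ^ 2 := by
  have := fc_le_rc n a; have := fc_le_rc n b
  have := fc_nonneg n a; have := fc_nonneg n b
  have := rc_nonneg n
  nlinarith

lemma pairsum (z : ℤ × ℤ) (n : ℕ) :
    srwP (2 * n) z + srwP (2 * n + 1) z ≤ srwP (2 * n) 0 := by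
  rw [srwP_origin]
  by_cases h : (z.1 + z.2) % 2 = 0
  · rw [srwP_odd_zero n z h, srwP_even_eq n z h, add_zero]
    exact fc_mul_le _ _ _
  · rw [srwP_even_zero n z h, zero_add, srwP_eq, sq]
    exact mul_le_mul (qw_le_rc_odd n _) (qw_le_rc_odd n _) (qw_nonneg _ _) (rc_nonneg n)

lemma T_nonneg (z : ℤ × ℤ) : ∀ M : ℕ, 0 ≤ ∑ k ∈ Finset.range M, (srwP k 0 - srwP k z) := by
  have horig : ∀ n : ℕ, srwP (2 * n + 1) 0 = 0 := fun n => srwP_odd_zero n 0 (by norm_num)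
  have heven : ∀ N : ℕ, 0 ≤ ∑ k ∈ Finset.range (2 * N), (srwP k 0 - srwP k z) := by
    intro N
    induction N with
    | zero => simp
    | succ N ih =>
        rw [show 2 * (N + 1) = (2 * N + 1) + 1 by ring, Finset.sum_range_succ,
          Finset.sum_range_succ]
        have hp := pairsum z N
        have h0 := horig N
        have h1 := srwP_nonneg (2 * N) z
        have h2 := srwP_nonneg (2 * N + 1) z
        linarith
  intro M
  rcases Nat.even_or_odd M with ⟨N, hM⟩ | ⟨N, hM⟩
  · rw [hM, show N + N = 2 * N by ring]; exact heven N
  · rw [hM, Finset.sum_range_succ]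
    have hp := pairsum z N
    have h0 := horig N
    have h1 := srwP_nonneg (2 * N) z
    have h2 := srwP_nonneg (2 * N + 1) z
    have := heven N
    linarith

noncomputable def errZ (z : ℤ × ℤ) (k : ℕ) : ℝ :=
  srwP k z - (if ((k : ℤ) - (z.1 + z.2)) % 2 = 0 then (2 / Real.pi) / ((k:ℝ) + 1) else 0)

lemma summable_errZ (z : ℤ × ℤ) : Summable (errZ z) := by
  obtain ⟨B, hB⟩ := part1 z
  rw [← summable_nat_add_iff 1]
  have hbound : ∀ k : ℕ, |errZ z (k + 1)| ≤ B * (1 / ((k:ℝ) + 1) ^ 2) := by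
    intro k
    have h := hB (k + 1)
    have hk1 : (0:ℝ) < ((k:ℝ) + 1) ^ 2 := by positivity
    have hcast : ((k + 1 : ℕ) : ℝ) = (k:ℝ) + 1 := by push_cast; ring
    rw [hcast] at h
    have : ((k:ℝ) + 1) ^ 2 * |errZ z (k + 1)| ≤ B := by
      unfold errZ
      convert h using 4
      push_cast
      ring
    rw [mul_one_div, le_div_iff₀ hk1]
    linarith [this]
  have hsummable : Summable (fun k : ℕ => B * (1 / ((k:ℝ) + 1) ^ 2)) := by
    apply Summable.mul_left
    have := (Real.summable_one_div_nat_pow (p := 2)).2 (by norm_num)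
    have h2 := (summable_nat_add_iff (f := fun n : ℕ => 1 / (n:ℝ) ^ 2) 1).2 this
    convert h2 using 2 with k
    push_cast
    rfl
    push_cast
    ring
  exact Summable.of_abs (hsummable.of_nonneg_of_le (fun k => abs_nonneg _) hbound)

lemma tendsto_errsum (z : ℤ × ℤ) :
    Tendsto (fun N => ∑ k ∈ Finset.range (N + 1), errZ z k) atTop (𝓝 (∑' k, errZ z k)) := by
  have h := (summable_errZ z).hasSum.tendsto_sum_nat
  exact h.comp (tendsto_add_atTop_nat 1)

lemma exists_limit (z : ℤ × ℤ) : ∃ L : ℝ, 0 ≤ L ∧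
    Tendsto (fun N => ∑ k ∈ Finset.range (N + 1), (srwP k 0 - srwP k z)) atTop (𝓝 L) := by
  have hpi := Real.pi_pos
  by_cases h : (z.1 + z.2) % 2 = 0
  · have hk : ∀ k : ℕ, srwP k 0 - srwP k z = errZ 0 k - errZ z k := by
      intro k
      unfold errZ
      simp only [Prod.fst_zero, Prod.snd_zero, add_zero, sub_zero]
      by_cases hc : ((k:ℤ)) % 2 = 0
      · rw [if_pos hc, if_pos (by omega)]; ring
      · rw [if_neg hc, if_neg (by omega)]; ring
    have hT : Tendsto (fun N => ∑ k ∈ Finset.range (N + 1), (srwP k 0 - srwP k z)) atTop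
        (𝓝 ((∑' k, errZ 0 k) - ∑' k, errZ z k)) := by
      refine Tendsto.congr (fun N => ?_) ((tendsto_errsum 0).sub (tendsto_errsum z))
      rw [← Finset.sum_sub_distrib]
      exact Finset.sum_congr rfl (fun k _ => (hk k).symm)
    exact ⟨_, ge_of_tendsto' hT (fun N => T_nonneg z (N + 1)), hT⟩
  · set f : ℕ → ℝ := fun k => (2 / Real.pi) / ((k:ℝ) + 1) with hf
    have hanti : Antitone f := by
      apply antitone_nat_of_succ_le
      intro k
      simp only [hf]
      gcongr
      all_goals first
        | positivity
        | (push_cast; linarith [Nat.cast_nonneg (α := ℝ) k])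
    have hto0 : Tendsto f atTop (𝓝 0) := by
      have h2 := (tendsto_const_div_atTop_nhds_zero_nat (2 / Real.pi)).comp
        (tendsto_add_atTop_nat 1)
      refine Tendsto.congr (fun k => ?_) h2
      simp only [Function.comp_apply, hf]
      push_cast
      ring_nf
    obtain ⟨l, hl⟩ := hanti.tendsto_alternating_series_of_tendsto_zero hto0
    have hl' := hl.comp (tendsto_add_atTop_nat 1)
    have hk : ∀ k : ℕ, srwP k 0 - srwP k z = errZ 0 k - errZ z k + (-1:ℝ)^k * f k := by
      intro k
      unfold errZ
      simp only [Prod.fst_zero, Prod.snd_zero, add_zero, sub_zero]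
      by_cases hc : ((k:ℤ)) % 2 = 0
      · have hp : ((-1:ℝ))^k = 1 := Even.neg_one_pow (by
          rw [Nat.even_iff]; omega)
        rw [if_pos hc, if_neg (by omega), hp, hf]; ring
      · have hp : ((-1:ℝ))^k = -1 := Odd.neg_one_pow (by
          rw [Nat.odd_iff]; omega)
        rw [if_neg hc, if_pos (by omega), hp, hf]; ring
    have hT : Tendsto (fun N => ∑ k ∈ Finset.range (N + 1), (srwP k 0 - srwP k z)) atTop
        (𝓝 (((∑' k, errZ 0 k) - ∑' k, errZ z k) + l)) := by
      refine Tendsto.congr (fun N => ?_) (((tendsto_errsum 0).sub (tendsto_errsum z)).add hl')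
      simp only [Function.comp_apply]
      rw [← Finset.sum_sub_distrib, ← Finset.sum_add_distrib]
      exact Finset.sum_congr rfl (fun k _ => (hk k).symm)
    exact ⟨_, ge_of_tendsto' hT (fun N => T_nonneg z (N + 1)), hT⟩

/-- **Section 4.3.5 (the potential kernel of simple random walk on `ℤ²`).**
There is `C > 0` such that
`ℙ_{(x,y)}[X_k = 0] = 1_{k ≡ x+y (mod 2)}·C/(k+1) + ε_{(x,y)}(k)` with
`sup_k k²|ε_{(x,y)}(k)| < ∞`; consequently
`φ(z) = lim_N Σ_{k=0}^N (ℙ_0(X_k=0) − ℙ_z(X_k=0))` exists, is nonnegative,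
vanishes at the origin and is harmonic on `ℤ² \ {0}`. -/
theorem stmt16 :
    ∃ C : ℝ, 0 < C ∧
      (∀ z : ℤ × ℤ, ∃ B : ℝ, ∀ k : ℕ,
        (k : ℝ) ^ 2 *
            |srwP k z - (if ((k : ℤ) - (z.1 + z.2)) % 2 = 0 then C / (k + 1) else 0)|
          ≤ B) ∧
      ∃ φ : ℤ × ℤ → ℝ,
        (∀ z : ℤ × ℤ,
          Tendsto (fun N => ∑ k ∈ Finset.range (N + 1), (srwP k 0 - srwP k z))
            atTop (𝓝 (φ z))) ∧
        (∀ z, 0 ≤ φ z) ∧ φ 0 = 0 ∧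
        ∀ z : ℤ × ℤ, z ≠ 0 →
          (φ (z + (1, 0)) + φ (z - (1, 0)) + φ (z + (0, 1)) + φ (z - (0, 1))) / 4
            = φ z := by
  have hpi := Real.pi_pos
  refine ⟨2 / Real.pi, by positivity, fun z => part1 z, ?_⟩
  set φ : ℤ × ℤ → ℝ := fun z => (exists_limit z).choose with hφ
  have hTend : ∀ z, Tendsto (fun N => ∑ k ∈ Finset.range (N + 1), (srwP k 0 - srwP k z))
      atTop (𝓝 (φ z)) := fun z => (exists_limit z).choose_spec.2
  have hpos : ∀ z, 0 ≤ φ z := fun z => (exists_limit z).choose_spec.1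
  refine ⟨φ, hTend, hpos, ?_, ?_⟩
  · have h0 : Tendsto (fun N => ∑ k ∈ Finset.range (N + 1), (srwP k 0 - srwP k 0))
        atTop (𝓝 0) := by
      have : ∀ N : ℕ, (∑ k ∈ Finset.range (N + 1), (srwP k 0 - srwP k 0)) = 0 := by
        intro N; simp
      simp only [this]
      exact tendsto_const_nhds
    exact tendsto_nhds_unique (hTend 0) h0
  · intro z hz
    have h0z : srwP 0 z = 0 := by
      show (if z = 0 then (1:ℝ) else 0) = 0
      rw [if_neg hz]
    have hid : ∀ N : ℕ,
        ((∑ k ∈ Finset.range (N + 1), (srwP k 0 - srwP k (z + (1, 0)))) +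
         (∑ k ∈ Finset.range (N + 1), (srwP k 0 - srwP k (z - (1, 0)))) +
         (∑ k ∈ Finset.range (N + 1), (srwP k 0 - srwP k (z + (0, 1)))) +
         (∑ k ∈ Finset.range (N + 1), (srwP k 0 - srwP k (z - (0, 1))))) / 4
        = (∑ k ∈ Finset.range (N + 1), (srwP k 0 - srwP k z)) - srwP (N + 1) z := by
      intro N
      have hstep : ∀ k : ℕ,
          ((srwP k 0 - srwP k (z + (1, 0))) + (srwP k 0 - srwP k (z - (1, 0))) +
           (srwP k 0 - srwP k (z + (0, 1))) + (srwP k 0 - srwP k (z - (0, 1)))) / 4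
          = (srwP k 0 - srwP k z) + (srwP k z - srwP (k + 1) z) := by
        intro k
        have hrec : srwP (k + 1) z = (srwP k (z + (1, 0)) + srwP k (z - (1, 0)) +
            srwP k (z + (0, 1)) + srwP k (z - (0, 1))) / 4 := rfl
        rw [hrec]; ring
      rw [← Finset.sum_add_distrib, ← Finset.sum_add_distrib, ← Finset.sum_add_distrib,
        Finset.sum_div, Finset.sum_congr rfl (fun k _ => hstep k), Finset.sum_add_distrib,
        Finset.sum_range_sub' (fun k => srwP k z) (N + 1), h0z]
      ring
    have hdecay : Tendsto (fun N : ℕ => srwP (N + 1) z) atTop (𝓝 0) := by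
      have hb : ∀ N : ℕ, srwP (N + 1) z ≤ 4 / ((N:ℝ) + 2) := by
        intro N
        have h := srwP_le (N + 1) z
        have e : ((N + 1 : ℕ) : ℝ) + 1 = (N:ℝ) + 2 := by push_cast; ring
        rw [e] at h
        exact h
      have h4to0 : Tendsto (fun N : ℕ => 4 / ((N:ℝ) + 2)) atTop (𝓝 0) := by
        have h2 := (tendsto_const_div_atTop_nhds_zero_nat (4:ℝ)).comp (tendsto_add_atTop_nat 2)
        refine Tendsto.congr (fun N => ?_) h2
        simp only [Function.comp_apply]
        push_cast
        ring_nf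
      exact tendsto_of_tendsto_of_tendsto_of_le_of_le tendsto_const_nhds h4to0
        (fun N => srwP_nonneg _ _) hb
    have hlhs : Tendsto (fun N =>
        ((∑ k ∈ Finset.range (N + 1), (srwP k 0 - srwP k (z + (1, 0)))) +
         (∑ k ∈ Finset.range (N + 1), (srwP k 0 - srwP k (z - (1, 0)))) +
         (∑ k ∈ Finset.range (N + 1), (srwP k 0 - srwP k (z + (0, 1)))) +
         (∑ k ∈ Finset.range (N + 1), (srwP k 0 - srwP k (z - (0, 1))))) / 4) atTop
        (𝓝 ((φ (z + (1, 0)) + φ (z - (1, 0)) + φ (z + (0, 1)) + φ (z - (0, 1))) / 4)) :=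
      ((((hTend (z + (1, 0))).add (hTend (z - (1, 0)))).add (hTend (z + (0, 1)))).add
        (hTend (z - (0, 1)))).div_const 4
    have hrhs : Tendsto (fun N =>
        ((∑ k ∈ Finset.range (N + 1), (srwP k 0 - srwP k (z + (1, 0)))) +
         (∑ k ∈ Finset.range (N + 1), (srwP k 0 - srwP k (z - (1, 0)))) +
         (∑ k ∈ Finset.range (N + 1), (srwP k 0 - srwP k (z + (0, 1)))) +
         (∑ k ∈ Finset.range (N + 1), (srwP k 0 - srwP k (z - (0, 1))))) / 4) atTop
        (𝓝 (φ z - 0)) :=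
      Tendsto.congr (fun N => (hid N).symm) ((hTend z).sub hdecay)
    have := tendsto_nhds_unique hlhs hrhs
    rw [sub_zero] at this
    exact this
end

section
/- Let E be countable with an irreducible recurrent Markov chain (locally finite transitions), x₀ ∈ E, and suppose φ : E → ℝ satisfies: ℙ_x(X_k = x₀) → 0 as k → ∞ for every x, and Σ_{k=0}^{N}[ℙ_{x₀}(X_k = x₀) − ℙ_x(X_k = x₀)] → φ(x) as N → ∞ for every x. Then φ(x₀) = 0 and φ is harmonic at every x ≠ x₀, i.e. Σ_y p_{x,y} φ(y) = φ(x) for x ≠ x₀. -/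
open MeasureTheory Filter Topology

namespace Stmt17Aux

set_option linter.unusedSectionVars false


variable {E : Type*} [Countable E] [DecidableEq E] [MeasurableSpace E]
    [MeasurableSingletonClass E] {Ω : Type*} [MeasurableSpace Ω]

def extFn {E : Type*} (n : ℕ) (v : Fin (n + 1) → E) (j : ℕ) : E :=
  v ⟨min j n, Nat.lt_succ_of_le (min_le_right _ _)⟩

lemma extFn_le {E : Type*} (n : ℕ) (v : Fin (n + 1) → E) {j : ℕ} (h : j ≤ n) :
    extFn n v j = v ⟨j, Nat.lt_succ_of_le h⟩ := by
  simp only [extFn]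
  congr 1
  exact Fin.ext (by simp [Nat.min_eq_left h])

lemma mem_cyl_iff (X : ℕ → Ω → E) (n : ℕ) (v : Fin (n + 1) → E) (ω : Ω) :
    (∀ i ≤ n, X i ω = extFn n v i) ↔ ∀ i : Fin (n + 1), X i ω = v i := by
  constructor
  · intro h i
    have hi : (i : ℕ) ≤ n := Nat.lt_succ_iff.mp i.isLt
    have := h i hi
    rwa [extFn_le n v hi, show (⟨(i : ℕ), Nat.lt_succ_of_le hi⟩ : Fin (n + 1)) = i from
      Fin.ext rfl] at this
  · intro h i hi
    rw [extFn_le n v hi]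
    exact h ⟨i, Nat.lt_succ_of_le hi⟩

lemma cyl_measurable (X : ℕ → Ω → E) (hX : ∀ n, Measurable (X n)) (n : ℕ) (s : ℕ → E) :
    MeasurableSet {ω | ∀ i ≤ n, X i ω = s i} := by
  have : {ω | ∀ i ≤ n, X i ω = s i} = ⋂ (i : ℕ) (_ : i ≤ n), X i ⁻¹' {s i} := by
    ext ω; simp [Set.mem_iInter]
  rw [this]
  exact MeasurableSet.iInter fun i => MeasurableSet.iInter fun _ =>
    (hX i) (measurableSet_singleton _)

lemma decomp (X : ℕ → Ω → E) (hX : ∀ n, Measurable (X n)) (μ : Measure Ω)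
    (n : ℕ) (z : E) :
    μ {ω | X n ω = z}
      = ∑' v : Fin (n + 1) → E,
          (if v (Fin.last n) = z then μ {ω | ∀ i ≤ n, X i ω = extFn n v i} else 0) := by
  set C : (Fin (n + 1) → E) → Set Ω := fun v => {ω | ∀ i ≤ n, X i ω = extFn n v i} with hC
  have hmem : ∀ v (ω : Ω), ω ∈ C v ↔ ∀ i : Fin (n + 1), X i ω = v i :=
    fun v ω => mem_cyl_iff X n v ω
  have hlast : ∀ v (ω : Ω), ω ∈ C v → X n ω = v (Fin.last n) := by
    intro v ω hω
    have := (hmem v ω).mp hω (Fin.last n)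
    simpa using this
  have hdisj : Pairwise (Function.onFun Disjoint fun v => C v ∩ {ω | X n ω = z}) := by
    intro v w hvw
    refine Set.disjoint_left.mpr ?_
    rintro ω ⟨hv, -⟩ ⟨hw, -⟩
    exact hvw (funext fun i => ((hmem v ω).mp hv i).symm.trans ((hmem w ω).mp hw i))
  have hms : ∀ v, MeasurableSet (C v ∩ {ω | X n ω = z}) := fun v =>
    (cyl_measurable X hX n _).inter ((hX n) (measurableSet_singleton z))
  have hcover : {ω | X n ω = z} = ⋃ v, (C v ∩ {ω | X n ω = z}) := by
    ext ω
    constructor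
    · intro hω
      refine Set.mem_iUnion.mpr ⟨fun i => X i ω, ?_, hω⟩
      exact (hmem _ ω).mpr fun i => rfl
    · intro h
      rcases Set.mem_iUnion.mp h with ⟨v, -, h2⟩
      exact h2
  rw [hcover, measure_iUnion hdisj hms]
  refine tsum_congr fun v => ?_
  by_cases hv : v (Fin.last n) = z
  · rw [if_pos hv]
    congr 1
    refine Set.inter_eq_left.mpr fun ω hω => ?_
    show X n ω = z
    rw [hlast v ω hω, hv]
  · rw [if_neg hv]
    have : C v ∩ {ω | X n ω = z} = ∅ := by
      apply Set.eq_empty_iff_forall_notMem.mpr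
      rintro ω ⟨h1, h2⟩
      exact hv ((hlast v ω h1).symm.trans h2)
    rw [this, measure_empty]


lemma lemA (X : ℕ → Ω → E) (hX : ∀ n, Measurable (X n)) (ℙ : E → Measure Ω)
    (p : E → E → ℝ)
    (hchain : ∀ (x : E) (n : ℕ) (s : ℕ → E),
      (ℙ x) {ω | ∀ i ≤ n, X i ω = s i}
        = (if s 0 = x then 1 else 0) *
            ∏ i ∈ Finset.range n, ENNReal.ofReal (p (s i) (s (i + 1))))
    (x z : E) (n : ℕ) :
    (ℙ x) {ω | X n ω = z}
      = ∑' v : Fin (n + 1) → E,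
          (if v 0 = x then 1 else 0) * (if v (Fin.last n) = z then 1 else 0) *
            ∏ i : Fin n, ENNReal.ofReal (p (v i.castSucc) (v i.succ)) := by
  rw [decomp X hX (ℙ x) n z]
  refine tsum_congr fun v => ?_
  rw [hchain x n (extFn n v)]
  have h0 : extFn n v 0 = v 0 :=
    (extFn_le n v (Nat.zero_le n)).trans (congrArg v (Fin.ext (by simp)))
  have hprod : ∏ i ∈ Finset.range n, ENNReal.ofReal (p (extFn n v i) (extFn n v (i + 1)))
      = ∏ i : Fin n, ENNReal.ofReal (p (v i.castSucc) (v i.succ)) := by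
    rw [Finset.prod_range]
    refine Finset.prod_congr rfl fun i _ => ?_
    have e1 : extFn n v i = v i.castSucc :=
      (extFn_le n v (le_of_lt i.isLt)).trans (congrArg v (Fin.ext (by simp)))
    have e2 : extFn n v (i + 1) = v i.succ :=
      (extFn_le n v (Nat.succ_le_of_lt i.isLt)).trans (congrArg v (Fin.ext (by simp)))
    rw [e1, e2]
  rw [h0, hprod]
  by_cases hv : v (Fin.last n) = z
  · simp [hv]
  · simp [hv]

lemma lemB (X : ℕ → Ω → E) (hX : ∀ n, Measurable (X n)) (ℙ : E → Measure Ω)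
    (p : E → E → ℝ)
    (hchain : ∀ (x : E) (n : ℕ) (s : ℕ → E),
      (ℙ x) {ω | ∀ i ≤ n, X i ω = s i}
        = (if s 0 = x then 1 else 0) *
            ∏ i ∈ Finset.range n, ENNReal.ofReal (p (s i) (s (i + 1))))
    (x z : E) (n : ℕ) :
    (ℙ x) {ω | X (n + 1) ω = z}
      = ∑' y : E, ENNReal.ofReal (p x y) * (ℙ y) {ω | X n ω = z} := by
  have W : (Fin (n + 1) → E) → ENNReal := fun w =>
    ∏ i : Fin n, ENNReal.ofReal (p (w i.castSucc) (w i.succ))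
  set Wf : (Fin (n + 1) → E) → ENNReal := fun w =>
    ∏ i : Fin n, ENNReal.ofReal (p (w i.castSucc) (w i.succ)) with hWf
  have key : ∀ (y : E) (w : Fin (n + 1) → E),
      ((if (Fin.cons y w : Fin (n + 2) → E) 0 = x then (1 : ENNReal) else 0) *
        (if (Fin.cons y w : Fin (n + 2) → E) (Fin.last (n + 1)) = z then 1 else 0) *
        ∏ i : Fin (n + 1),
          ENNReal.ofReal (p ((Fin.cons y w : Fin (n + 2) → E) i.castSucc)
            ((Fin.cons y w : Fin (n + 2) → E) i.succ)))
      = (if y = x then 1 else 0) *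
          ((if w (Fin.last n) = z then 1 else 0) * (ENNReal.ofReal (p y (w 0)) * Wf w)) := by
    intro y w
    have h1 : (Fin.cons y w : Fin (n + 2) → E) 0 = y := Fin.cons_zero _ _
    have h2 : (Fin.cons y w : Fin (n + 2) → E) (Fin.last (n + 1)) = w (Fin.last n) := by
      rw [← Fin.succ_last, Fin.cons_succ]
    have h3 : (∏ i : Fin (n + 1),
          ENNReal.ofReal (p ((Fin.cons y w : Fin (n + 2) → E) i.castSucc)
            ((Fin.cons y w : Fin (n + 2) → E) i.succ)))
        = ENNReal.ofReal (p y (w 0)) * Wf w := by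
      rw [Fin.prod_univ_succ]
      have e0 : ENNReal.ofReal (p ((Fin.cons y w : Fin (n + 2) → E) ((0 : Fin (n+1)).castSucc))
          ((Fin.cons y w : Fin (n + 2) → E) ((0 : Fin (n+1)).succ))) = ENNReal.ofReal (p y (w 0)) := by
        simp
      have h4 : (∏ i : Fin n,
            ENNReal.ofReal (p ((Fin.cons y w : Fin (n + 2) → E) i.succ.castSucc)
              ((Fin.cons y w : Fin (n + 2) → E) i.succ.succ))) = Wf w := by
        refine Finset.prod_congr rfl fun i _ => ?_
        rw [← Fin.succ_castSucc, Fin.cons_succ, Fin.cons_succ]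
      rw [e0, h4]
    rw [h1, h2, h3]
    ring
  rw [lemA X hX ℙ p hchain x z (n + 1)]
  rw [← (Fin.consEquiv (fun _ : Fin (n + 2) => E)).tsum_eq]
  have hL : ∑' (yw : E × (Fin (n + 1) → E)),
      ((if (Fin.consEquiv (fun _ : Fin (n + 2) => E)) yw 0 = x then (1 : ENNReal) else 0) *
        (if (Fin.consEquiv (fun _ : Fin (n + 2) => E)) yw (Fin.last (n + 1)) = z then 1 else 0) *
        ∏ i : Fin (n + 1),
          ENNReal.ofReal (p ((Fin.consEquiv (fun _ : Fin (n + 2) => E)) yw i.castSucc)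
            ((Fin.consEquiv (fun _ : Fin (n + 2) => E)) yw i.succ)))
      = ∑' (y : E) (w : Fin (n + 1) → E),
          (if y = x then 1 else 0) *
            ((if w (Fin.last n) = z then 1 else 0) * (ENNReal.ofReal (p y (w 0)) * Wf w)) := by
    rw [← ENNReal.tsum_prod]
    exact tsum_congr fun yw => key yw.1 yw.2
  rw [hL]
  have hLx : ∑' (y : E) (w : Fin (n + 1) → E),
      (if y = x then (1 : ENNReal) else 0) *
        ((if w (Fin.last n) = z then 1 else 0) * (ENNReal.ofReal (p y (w 0)) * Wf w))
      = ∑' (w : Fin (n + 1) → E),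
          (if w (Fin.last n) = z then 1 else 0) * (ENNReal.ofReal (p x (w 0)) * Wf w) := by
    rw [tsum_eq_single x (fun y hy => by simp [if_neg hy])]
    simp
  rw [hLx]
  have hR : ∀ y : E, (ℙ y) {ω | X n ω = z}
      = ∑' w : Fin (n + 1) → E,
          (if w 0 = y then 1 else 0) * (if w (Fin.last n) = z then 1 else 0) * Wf w :=
    fun y => lemA X hX ℙ p hchain y z n
  calc ∑' (w : Fin (n + 1) → E),
        (if w (Fin.last n) = z then (1 : ENNReal) else 0) * (ENNReal.ofReal (p x (w 0)) * Wf w)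
      = ∑' (w : Fin (n + 1) → E) (y : E), ENNReal.ofReal (p x y) *
          ((if w 0 = y then 1 else 0) * (if w (Fin.last n) = z then 1 else 0) * Wf w) := by
        refine tsum_congr fun w => ?_
        rw [tsum_eq_single (w 0) (fun y hy => by simp [if_neg (fun h : w 0 = y => hy h.symm)])]
        simp [mul_comm, mul_assoc, mul_left_comm]
    _ = ∑' (y : E) (w : Fin (n + 1) → E), ENNReal.ofReal (p x y) *
          ((if w 0 = y then 1 else 0) * (if w (Fin.last n) = z then 1 else 0) * Wf w) :=
        ENNReal.tsum_comm
    _ = ∑' y : E, ENNReal.ofReal (p x y) * (ℙ y) {ω | X n ω = z} := by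
        refine tsum_congr fun y => ?_
        rw [ENNReal.tsum_mul_left, hR y]


lemma lem0 (X : ℕ → Ω → E) (ℙ : E → Measure Ω) (p : E → E → ℝ)
    (hchain : ∀ (x : E) (n : ℕ) (s : ℕ → E),
      (ℙ x) {ω | ∀ i ≤ n, X i ω = s i}
        = (if s 0 = x then 1 else 0) *
            ∏ i ∈ Finset.range n, ENNReal.ofReal (p (s i) (s (i + 1))))
    (x z : E) (hxz : z ≠ x) :
    (ℙ x) {ω | X 0 ω = z} = 0 := by
  have hset : {ω | X 0 ω = z} = {ω | ∀ i ≤ 0, X i ω = (fun _ => z) i} := by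
    ext ω
    constructor
    · intro h i hi
      obtain rfl : i = 0 := Nat.le_zero.mp hi
      exact h
    · intro h
      exact h 0 le_rfl
  rw [hset, hchain x 0 (fun _ => z)]
  simp [hxz]

lemma lemC (X : ℕ → Ω → E) (hX : ∀ n, Measurable (X n)) (ℙ : E → Measure Ω)
    (hprob : ∀ x, IsProbabilityMeasure (ℙ x)) (p : E → E → ℝ)
    (hp0 : ∀ y z, 0 ≤ p y z) (hfin : ∀ y, {z | p y z ≠ 0}.Finite)
    (hchain : ∀ (x : E) (n : ℕ) (s : ℕ → E),
      (ℙ x) {ω | ∀ i ≤ n, X i ω = s i}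
        = (if s 0 = x then 1 else 0) *
            ∏ i ∈ Finset.range n, ENNReal.ofReal (p (s i) (s (i + 1))))
    (x z : E) (n : ℕ) :
    ((ℙ x) {ω | X (n + 1) ω = z}).toReal
      = ∑ y ∈ (hfin x).toFinset, p x y * ((ℙ y) {ω | X n ω = z}).toReal := by
  rw [lemB X hX ℙ p hchain x z n]
  rw [tsum_eq_sum (s := (hfin x).toFinset) (fun y hy => by
    rw [show p x y = 0 from not_not.mp (fun h => hy ((hfin x).mem_toFinset.mpr h))]
    simp)]
  rw [ENNReal.toReal_sum (fun y _ => by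
    haveI := hprob y
    exact ENNReal.mul_ne_top ENNReal.ofReal_ne_top (measure_ne_top _ _))]
  refine Finset.sum_congr rfl fun y _ => ?_
  rw [ENNReal.toReal_mul, ENNReal.toReal_ofReal (hp0 x y)]

end Stmt17Aux

/-- **Proposition 4.3.1 (second condition).** Let `E` be countable with an irreducible
recurrent Markov chain with locally finite transitions, `x₀ ∈ E`, and suppose
`φ : E → ℝ` satisfies: `ℙ_x(X_k = x₀) → 0` for every `x`, and
`Σ_{k=0}^N [ℙ_{x₀}(X_k = x₀) − ℙ_x(X_k = x₀)] → φ(x)`.  Then `φ(x₀) = 0` and `φ` is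
harmonic at every `x ≠ x₀`. -/
theorem stmt17
    {E : Type*} [Countable E] [DecidableEq E] [MeasurableSpace E]
    [MeasurableSingletonClass E]
    {Ω : Type*} [MeasurableSpace Ω]
    (X : ℕ → Ω → E) (hXmeas : ∀ n, Measurable (X n))
    (ℙ : E → Measure Ω) (hprob : ∀ x, IsProbabilityMeasure (ℙ x))
    (p : E → E → ℝ) (hp0 : ∀ y z, 0 ≤ p y z) (hp1 : ∀ y, ∑' z, p y z = 1)
    -- locally finite transitions
    (hfin : ∀ y, {z | p y z ≠ 0}.Finite)
    -- the canonical Markov chain property: finite dimensional distributions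
    (hchain : ∀ (x : E) (n : ℕ) (s : ℕ → E),
      (ℙ x) {ω | ∀ i ≤ n, X i ω = s i}
        = (if s 0 = x then 1 else 0) *
            ∏ i ∈ Finset.range n, ENNReal.ofReal (p (s i) (s (i + 1))))
    -- irreducibility
    (hirr : ∀ x y : E, ∃ n : ℕ, 0 < (ℙ x) {ω | X n ω = y})
    -- recurrence
    (hrec : ∀ x y : E, ∀ᵐ ω ∂(ℙ x), ∃ n : ℕ, 0 < n ∧ X n ω = y)
    (x₀ : E) (φ : E → ℝ)
    (hvanish : ∀ x : E,
      Tendsto (fun k => ((ℙ x) {ω | X k ω = x₀}).toReal) atTop (𝓝 0))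
    (hconv : ∀ x : E,
      Tendsto
        (fun N => ∑ k ∈ Finset.range (N + 1),
          (((ℙ x₀) {ω | X k ω = x₀}).toReal - ((ℙ x) {ω | X k ω = x₀}).toReal))
        atTop (𝓝 (φ x))) :
    φ x₀ = 0 ∧ ∀ x : E, x ≠ x₀ → ∑' y, p x y * φ y = φ x := by
  classical
  set u : E → ℕ → ℝ := fun x k => ((ℙ x) {ω | X k ω = x₀}).toReal with hu
  have hconv' : ∀ y : E, Tendsto
      (fun N => ∑ k ∈ Finset.range (N + 1), (u x₀ k - u y k)) atTop (𝓝 (φ y)) :=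
    fun y => hconv y
  have hvanish' : ∀ y : E, Tendsto (fun k => u y k) atTop (𝓝 0) := fun y => hvanish y
  constructor
  · have h0 : Tendsto (fun _ : ℕ => (0 : ℝ)) atTop (𝓝 (φ x₀)) := by
      have := hconv' x₀
      simpa using this
    exact (tendsto_nhds_unique tendsto_const_nhds h0).symm
  · intro x hx
    set S := (hfin x).toFinset with hS
    have hout : ∀ y ∉ S, p x y = 0 := fun y hy =>
      not_not.mp (fun h => hy ((hfin x).mem_toFinset.mpr h))
    have hpS : ∑ y ∈ S, p x y = 1 := by
      rw [← hp1 x]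
      exact (tsum_eq_sum hout).symm
    have hstep : ∀ k, u x (k + 1) = ∑ y ∈ S, p x y * u y k := fun k =>
      Stmt17Aux.lemC X hXmeas ℙ hprob p hp0 hfin hchain x x₀ k
    have hu0 : u x 0 = 0 := by
      have := Stmt17Aux.lem0 X ℙ p hchain x x₀ (fun h => hx h.symm)
      rw [hu]
      simp only []
      rw [this]
      simp
    have h1 : ∀ k, ∑ y ∈ S, p x y * (u x₀ k - u y k) = u x₀ k - u x (k + 1) := by
      intro k
      calc ∑ y ∈ S, p x y * (u x₀ k - u y k)
          = ∑ y ∈ S, (p x y * u x₀ k - p x y * u y k) := by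
            refine Finset.sum_congr rfl fun y _ => ?_
            ring
        _ = (∑ y ∈ S, p x y) * u x₀ k - ∑ y ∈ S, p x y * u y k := by
            rw [Finset.sum_sub_distrib, Finset.sum_mul]
        _ = u x₀ k - u x (k + 1) := by rw [hpS, one_mul, hstep k]
    have key : ∀ N, ∑ y ∈ S, p x y * (∑ k ∈ Finset.range (N + 1), (u x₀ k - u y k))
        = (∑ k ∈ Finset.range (N + 1), (u x₀ k - u x k)) - u x (N + 1) := by
      intro N
      calc ∑ y ∈ S, p x y * (∑ k ∈ Finset.range (N + 1), (u x₀ k - u y k))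
          = ∑ y ∈ S, ∑ k ∈ Finset.range (N + 1), p x y * (u x₀ k - u y k) := by
            refine Finset.sum_congr rfl fun y _ => ?_
            rw [Finset.mul_sum]
        _ = ∑ k ∈ Finset.range (N + 1), ∑ y ∈ S, p x y * (u x₀ k - u y k) :=
            Finset.sum_comm
        _ = ∑ k ∈ Finset.range (N + 1), (u x₀ k - u x (k + 1)) :=
            Finset.sum_congr rfl fun k _ => h1 k
        _ = (∑ k ∈ Finset.range (N + 1), (u x₀ k - u x k)) - u x (N + 1) := by
            rw [Finset.sum_sub_distrib, Finset.sum_sub_distrib]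
            have e1 := Finset.sum_range_succ' (u x) (N + 1)
            have e2 := Finset.sum_range_succ (u x) (N + 1)
            rw [hu0, add_zero] at e1
            linarith
    have hta : Tendsto
        (fun N => ∑ y ∈ S, p x y * (∑ k ∈ Finset.range (N + 1), (u x₀ k - u y k)))
        atTop (𝓝 (∑ y ∈ S, p x y * φ y)) :=
      tendsto_finset_sum S fun y _ => (hconv' y).const_mul (p x y)
    have htb : Tendsto
        (fun N => (∑ k ∈ Finset.range (N + 1), (u x₀ k - u x k)) - u x (N + 1))
        atTop (𝓝 (φ x - 0)) := by
      refine (hconv' x).sub ?_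
      have := (hvanish' x).comp (tendsto_add_atTop_nat 1)
      exact this
    rw [show (fun N => ∑ y ∈ S, p x y * (∑ k ∈ Finset.range (N + 1), (u x₀ k - u y k)))
        = fun N => (∑ k ∈ Finset.range (N + 1), (u x₀ k - u x k)) - u x (N + 1) from
      funext key] at hta
    have hfinal : ∑ y ∈ S, p x y * φ y = φ x - 0 := tendsto_nhds_unique hta htb
    rw [tsum_eq_sum (s := S) (fun y hy => by rw [hout y hy, zero_mul])]
    rw [hfinal, sub_zero]
end

section
/- Let (X_n) be a recurrent Markov chain on countable E with laws (ℙ_x), and let (ψ_r(X_n)·r^{L_{n-1}^{x₀}})_{n≥0} be the positive martingale of Proposition 4.1.1, defining the finite measure μ_x^{(r)} on 𝓕_∞ by μ_x^{(r)}|_{𝓕_n} = ψ_r(X_n)·r^{L_{n-1}^{x₀}}·ℙ_x|_{𝓕_n}. Then for every σ ∈ (0, 1/r): μ_x^{(r)}(σ^{L_{n-1}^{x₀}}) ≤ max((1−σr)/(σ(1−r)), 1)·ψ_{σr}(x) for all n ≥ 1, and consequently μ_x^{(r)}(σ^{L_∞^{x₀}}) < ∞ and L_∞^{x₀} < ∞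 μ_x^{(r)}-almost surely. -/
open MeasureTheory Filter Topology

open scoped ENNReal NNReal

section Helpers


theorem keysum {E : Type*} [DecidableEq E]
    (p : E → E → ℝ) (hp0 : ∀ y z, 0 ≤ p y z) (hp1 : ∀ y, ∑' z, p y z = 1)
    (hfin : ∀ y, {z | p y z ≠ 0}.Finite)
    (x₀ : E) (φ : E → ℝ) (hφx₀ : φ x₀ = 0)
    (hharm : ∀ y, y ≠ x₀ → ∑' z, p y z * φ z = φ y)
    (ρ : ℝ) (hρ0 : 0 < ρ) (hρ1 : ρ < 1) (y : E) :
    ρ ^ (if y = x₀ then (1:ℕ) else 0) *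
      ∑' z, p y z * (ρ / (1 - ρ) * (∑' z, p x₀ z * φ z) + φ z)
      = ρ / (1 - ρ) * (∑' z, p x₀ z * φ z) + φ y := by
  set S := ∑' z, p x₀ z * φ z with hS
  set c := ρ / (1 - ρ) * S with hc
  have hsupp : ∀ (f : E → ℝ), (∀ z, p y z = 0 → f z = 0) → Summable f := by
    intro f hf
    refine summable_of_ne_finset_zero (s := (hfin y).toFinset) (fun z hz => hf z ?_)
    by_contra h
    exact hz ((hfin y).mem_toFinset.2 h)
  have h1 : Summable (fun z => p y z) := hsupp _ (fun z h => h)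
  have h2 : Summable (fun z => p y z * φ z) := hsupp _ (fun z h => by simp [h])
  have hsplit : ∑' z, p y z * (c + φ z) = c + ∑' z, p y z * φ z := by
    have e1 : ∀ z, p y z * (c + φ z) = c * p y z + p y z * φ z := by intro z; ring
    rw [tsum_congr e1, Summable.tsum_add (h1.mul_left c) h2, tsum_mul_left, hp1 y, mul_one]
  have h1ρ : (1:ℝ) - ρ ≠ 0 := by linarith
  by_cases hy : y = x₀
  · subst hy
    rw [if_pos rfl, hsplit, ← hS, hφx₀, hc, pow_one, add_zero]
    field_simp
    ring
  · rw [if_neg hy, hsplit, hharm y hy, pow_zero, one_mul]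

theorem lint_cyl {E : Type*} [Countable E] [MeasurableSpace E] [MeasurableSingletonClass E]
    {Ω : Type*} [m0 : MeasurableSpace Ω]
    (X : ℕ → Ω → E) (hXmeas : ∀ n, Measurable (X n)) (ℙx : Measure Ω) (n : ℕ)
    (f : Ω → ℝ≥0∞) (g : (Fin (n+1) → E) → ℝ≥0∞)
    (hfg : ∀ ω, f ω = g fun i => X i ω) :
    ∫⁻ ω, f ω ∂ℙx
      = ∑' v : Fin (n+1) → E, g v * ℙx {ω | ∀ i : Fin (n+1), X i ω = v i} := by
  have hmeas : ∀ v : Fin (n+1) → E, MeasurableSet {ω | ∀ i : Fin (n+1), X i ω = v i} := by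
    intro v
    have : {ω | ∀ i : Fin (n+1), X i ω = v i} = ⋂ i : Fin (n+1), X i ⁻¹' {v i} := by
      ext ω; simp [Set.mem_iInter]
    rw [this]
    exact MeasurableSet.iInter fun i => (hXmeas i) (measurableSet_singleton _)
  have hcover : (⋃ v : Fin (n+1) → E, {ω | ∀ i : Fin (n+1), X i ω = v i}) = Set.univ := by
    ext ω
    simp only [Set.mem_iUnion, Set.mem_univ, iff_true]
    exact ⟨fun i => X i ω, fun i => rfl⟩
  have hdisj : Pairwise (Function.onFun Disjoint
      (fun v : Fin (n+1) → E => {ω | ∀ i : Fin (n+1), X i ω = v i})) := by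
    intro v w hvw
    refine Set.disjoint_left.2 fun ω hv hw => hvw ?_
    funext i
    rw [← hv i, ← hw i]
  calc ∫⁻ ω, f ω ∂ℙx = ∫⁻ ω in Set.univ, f ω ∂ℙx := by rw [Measure.restrict_univ]
    _ = ∑' v : Fin (n+1) → E, ∫⁻ ω in {ω | ∀ i : Fin (n+1), X i ω = v i}, f ω ∂ℙx := by
        rw [← hcover, lintegral_iUnion hmeas hdisj]
    _ = ∑' v : Fin (n+1) → E, g v * ℙx {ω | ∀ i : Fin (n+1), X i ω = v i} := by
        refine tsum_congr fun v => ?_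
        rw [setLIntegral_congr_fun (hmeas v)
          (fun ω hω => ?_ : Set.EqOn f (fun _ => g v) _),
          setLIntegral_const]
        have : (fun i : Fin (n+1) => X i ω) = v := funext fun i => hω i
        rw [hfg ω, this]


theorem prob_cyl {E : Type*} [DecidableEq E] {Ω : Type*} [MeasurableSpace Ω]
    (X : ℕ → Ω → E) (ℙx : Measure Ω) (p : E → E → ℝ) (x : E)
    (hchain : ∀ (n : ℕ) (s : ℕ → E),
      ℙx {ω | ∀ i ≤ n, X i ω = s i}
        = (if s 0 = x then 1 else 0) *
            ∏ i ∈ Finset.range n, ENNReal.ofReal (p (s i) (s (i + 1))))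
    (n : ℕ) (v : Fin (n+1) → E) :
    ℙx {ω | ∀ i : Fin (n+1), X i ω = v i}
      = (if v 0 = x then 1 else 0) *
          ∏ i : Fin n, ENNReal.ofReal (p (v i.castSucc) (v i.succ)) := by
  set s : ℕ → E := fun i => v ⟨min i n, by omega⟩ with hs
  have hset : {ω | ∀ i : Fin (n+1), X i ω = v i} = {ω | ∀ i ≤ n, X i ω = s i} := by
    ext ω
    constructor
    · intro h i hi
      have := h ⟨i, by omega⟩
      simpa [hs, Nat.min_eq_left hi] using this
    · intro h i
      have := h i (by omega)
      have hv : s (i : ℕ) = v i := by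
        simp only [hs]
        congr 1
        exact Fin.ext (by simp [Nat.min_eq_left (Nat.lt_succ_iff.1 i.isLt)])
      rw [← hv]
      exact this
  rw [hset, hchain n s]
  congr 1
  · rw [← Fin.prod_univ_eq_prod_range (fun i => ENNReal.ofReal (p (s i) (s (i + 1)))) n]
    refine Finset.prod_congr rfl fun i _ => ?_
    have h1 : s (i : ℕ) = v i.castSucc := by
      simp only [hs]
      congr 1
      exact Fin.ext (by simp [Nat.min_eq_left (Nat.le_of_lt_succ (Nat.lt_succ_of_lt i.isLt))])
    have h2 : s ((i : ℕ) + 1) = v i.succ := by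
      simp only [hs]
      congr 1
      exact Fin.ext (by simp [Nat.min_eq_left (Nat.succ_le_of_lt i.isLt)])
    rw [h1, h2]

theorem mart {E : Type*} [Countable E] [DecidableEq E] [MeasurableSpace E]
    [MeasurableSingletonClass E]
    {Ω : Type*} [m0 : MeasurableSpace Ω]
    (X : ℕ → Ω → E) (hXmeas : ∀ n, Measurable (X n)) (ℙx : Measure Ω)
    (p : E → E → ℝ) (hp0 : ∀ y z, 0 ≤ p y z) (hp1 : ∀ y, ∑' z, p y z = 1)
    (hfin : ∀ y, {z | p y z ≠ 0}.Finite) (x : E)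
    (hchain : ∀ (n : ℕ) (s : ℕ → E),
      ℙx {ω | ∀ i ≤ n, X i ω = s i}
        = (if s 0 = x then 1 else 0) *
            ∏ i ∈ Finset.range n, ENNReal.ofReal (p (s i) (s (i + 1))))
    (x₀ : E) (φ : E → ℝ) (hφ0 : ∀ y, 0 ≤ φ y) (hφx₀ : φ x₀ = 0)
    (hharm : ∀ y, y ≠ x₀ → ∑' z, p y z * φ z = φ y)
    (ρ : ℝ) (hρ0 : 0 < ρ) (hρ1 : ρ < 1) (n : ℕ) :
    ∫⁻ ω, ENNReal.ofReal ((ρ / (1 - ρ) * (∑' z, p x₀ z * φ z) + φ (X n ω)) *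
        ρ ^ ∑ m ∈ Finset.range n, (if X m ω = x₀ then (1:ℕ) else 0)) ∂ℙx
      = ENNReal.ofReal (ρ / (1 - ρ) * (∑' z, p x₀ z * φ z) + φ x) := by
  set S := ∑' z, p x₀ z * φ z with hS
  have hS0 : 0 ≤ S := tsum_nonneg fun z => mul_nonneg (hp0 _ _) (hφ0 _)
  set c := ρ / (1 - ρ) * S with hc
  have hc0 : 0 ≤ c := mul_nonneg (div_nonneg hρ0.le (by linarith)) hS0
  -- the discrete "length-n" sum
  set G : ∀ n : ℕ, (Fin (n+1) → E) → ℝ≥0∞ := fun n v =>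
    ENNReal.ofReal ((c + φ (v (Fin.last n))) *
      ρ ^ ∑ m : Fin n, (if v m.castSucc = x₀ then (1:ℕ) else 0)) *
      ℙx {ω | ∀ i : Fin (n+1), X i ω = v i} with hG
  have key : ∀ n : ℕ, (∑' v : Fin (n+1) → E, G n v) = ENNReal.ofReal (c + φ x) := by
    intro n
    induction n with
    | zero =>
      have he := ((Equiv.funUnique (Fin 1) E).symm.tsum_eq (G 0)).symm
      rw [he]
      have hterm : ∀ y : E, G 0 ((Equiv.funUnique (Fin 1) E).symm y)
          = if y = x then ENNReal.ofReal (c + φ y) else 0 := by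
        intro y
        have hv : ∀ i : Fin 1, (Equiv.funUnique (Fin 1) E).symm y i = y := fun i => rfl
        rw [hG]
        simp only [hv]
        rw [prob_cyl X ℙx p x hchain 0]
        simp only [hv, Finset.univ_eq_empty, Finset.prod_empty, Finset.sum_empty,
          pow_zero, mul_one]
        by_cases hy : y = x
        · simp [hy]
        · simp [hy]
      rw [tsum_congr hterm, tsum_eq_single x (fun y hy => by simp [hy])]
      simp
    | succ n ih =>
      -- decompose paths of length n+2 as (last value, first n+1 values)
      set e := Fin.insertNthEquiv (fun _ : Fin (n+2) => E) (Fin.last (n+1)) with hedef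
      rw [← e.tsum_eq (G (n+1))]
      have hterm : ∀ q : E × (Fin (n+1) → E),
          G (n+1) (e q)
            = (ENNReal.ofReal (ρ ^ ∑ m : Fin n, (if q.2 m.castSucc = x₀ then (1:ℕ) else 0)) *
                ℙx {ω | ∀ i : Fin (n+1), X i ω = q.2 i} *
                ENNReal.ofReal (ρ ^ (if q.2 (Fin.last n) = x₀ then (1:ℕ) else 0))) *
              ENNReal.ofReal (p (q.2 (Fin.last n)) q.1 * (c + φ q.1)) := by
        rintro ⟨z, v⟩
        set w : Fin (n+2) → E := e (z, v) with hw
        have hlast : w (Fin.last (n+1)) = z := by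
          rw [hw, hedef]
          exact Fin.insertNth_apply_same (α := fun _ : Fin (n+2) => E) (Fin.last (n+1)) z v
        have hcast : ∀ j : Fin (n+1), w j.castSucc = v j := by
          intro j
          rw [hw, hedef, ← Fin.succAbove_last]
          exact Fin.insertNth_apply_succAbove (α := fun _ : Fin (n+2) => E) (Fin.last (n+1)) z v j
        have hL : (∑ m : Fin (n+1), (if w m.castSucc = x₀ then (1:ℕ) else 0))
            = (∑ m : Fin n, (if v m.castSucc = x₀ then (1:ℕ) else 0)) +
              (if v (Fin.last n) = x₀ then (1:ℕ) else 0) := by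
          rw [Fin.sum_univ_castSucc]
          congr 1
          · exact Finset.sum_congr rfl fun m _ => by rw [hcast m.castSucc]
          · rw [hcast (Fin.last n)]
        have hprob : ℙx {ω | ∀ i : Fin (n+2), X i ω = w i}
            = ℙx {ω | ∀ i : Fin (n+1), X i ω = v i} *
              ENNReal.ofReal (p (v (Fin.last n)) z) := by
          rw [prob_cyl X ℙx p x hchain (n+1) w, prob_cyl X ℙx p x hchain n v,
            Fin.prod_univ_castSucc]
          have h0 : w 0 = v 0 := by
            rw [← Fin.castSucc_zero]
            exact hcast 0
          have hlastfac : w (Fin.last n).castSucc = v (Fin.last n) := hcast _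
          have hlastsucc : w (Fin.last n).succ = z := by
            rw [Fin.succ_last]
            exact hlast
          have hfac : ∀ i : Fin n,
              ENNReal.ofReal (p (w i.castSucc.castSucc) (w i.castSucc.succ))
                = ENNReal.ofReal (p (v i.castSucc) (v i.succ)) := by
            intro i
            rw [hcast i.castSucc, Fin.succ_castSucc, hcast i.succ]
          rw [h0, hlastfac, hlastsucc, Finset.prod_congr rfl (fun i _ => hfac i)]
          ring
        simp only [hG]
        rw [hlast, hL, hprob, pow_add,
          ENNReal.ofReal_mul (add_nonneg hc0 (hφ0 z)),
          ENNReal.ofReal_mul (pow_nonneg hρ0.le _),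
          ENNReal.ofReal_mul (hp0 _ _)]
        ring
      rw [tsum_congr hterm, ENNReal.tsum_prod', ENNReal.tsum_comm]
      have hinner : ∀ v : Fin (n+1) → E,
          (∑' z : E,
            (ENNReal.ofReal (ρ ^ ∑ m : Fin n, (if v m.castSucc = x₀ then (1:ℕ) else 0)) *
                ℙx {ω | ∀ i : Fin (n+1), X i ω = v i} *
                ENNReal.ofReal (ρ ^ (if v (Fin.last n) = x₀ then (1:ℕ) else 0))) *
              ENNReal.ofReal (p (v (Fin.last n)) z * (c + φ z)))
            = G n v := by
        intro v
        rw [ENNReal.tsum_mul_left]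
        have hsummable : Summable (fun z => p (v (Fin.last n)) z * (c + φ z)) := by
          refine summable_of_ne_finset_zero (s := (hfin (v (Fin.last n))).toFinset)
            (fun z hz => ?_)
          have : p (v (Fin.last n)) z = 0 := by
            by_contra h
            exact hz ((hfin _).mem_toFinset.2 h)
          simp [this]
        rw [← ENNReal.ofReal_tsum_of_nonneg
          (fun z => mul_nonneg (hp0 _ _) (add_nonneg hc0 (hφ0 z))) hsummable]
        rw [mul_assoc, ← ENNReal.ofReal_mul (pow_nonneg hρ0.le _)]
        rw [keysum p hp0 hp1 hfin x₀ φ hφx₀ hharm ρ hρ0 hρ1 (v (Fin.last n)), ← hS, ← hc]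
        simp only [hG]
        rw [ENNReal.ofReal_mul (add_nonneg hc0 (hφ0 _))]
        ring
      rw [tsum_congr hinner, ih]
  -- identify the integral with the discrete sum
  rw [lint_cyl X hXmeas ℙx n _
    (fun v => ENNReal.ofReal ((c + φ (v (Fin.last n))) *
      ρ ^ ∑ m : Fin n, (if v m.castSucc = x₀ then (1:ℕ) else 0)))
    (fun ω => by
      simp only [Fin.coe_castSucc, Fin.val_last]
      rw [← Fin.sum_univ_eq_sum_range (fun k => if X k ω = x₀ then (1:ℕ) else 0) n])]
  exact key n

end Helpers

/-- **Section 4.1.2 (formulae (4.1.8), (4.1.9)).** Let `(ψ_r(X_n)·r^{L_{n-1}^{x₀}})`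
be the positive martingale of Proposition 4.1.1, and let `μ_x^{(r)}` be the finite
measure on `𝓕_∞` with `μ_x^{(r)}|_{𝓕_n} = ψ_r(X_n)·r^{L_{n-1}^{x₀}}·ℙ_x|_{𝓕_n}`.
Then for every `σ ∈ (0, 1/r)`:
`μ_x^{(r)}(σ^{L_{n-1}^{x₀}}) ≤ max((1−σr)/(σ(1−r)), 1)·ψ_{σr}(x)` for all `n ≥ 1`;
consequently `μ_x^{(r)}(σ^{L_∞^{x₀}}) < ∞` and `L_∞^{x₀} < ∞`, `μ_x^{(r)}`-a.s. -/
theorem stmt18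
    {E : Type*} [Countable E] [DecidableEq E] [MeasurableSpace E]
    [MeasurableSingletonClass E]
    {Ω : Type*} [m0 : MeasurableSpace Ω]
    (X : ℕ → Ω → E) (hXmeas : ∀ n, Measurable (X n))
    (ℙ : E → Measure Ω) (hprob : ∀ x, IsProbabilityMeasure (ℙ x))
    (p : E → E → ℝ) (hp0 : ∀ y z, 0 ≤ p y z) (hp1 : ∀ y, ∑' z, p y z = 1)
    (hfin : ∀ y, {z | p y z ≠ 0}.Finite)
    (hchain : ∀ (x : E) (n : ℕ) (s : ℕ → E),
      (ℙ x) {ω | ∀ i ≤ n, X i ω = s i}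
        = (if s 0 = x then 1 else 0) *
            ∏ i ∈ Finset.range n, ENNReal.ofReal (p (s i) (s (i + 1))))
    -- recurrence
    (hrec : ∀ x y : E, ∀ᵐ ω ∂(ℙ x), ∃ n : ℕ, 0 < n ∧ X n ω = y)
    -- the natural filtration of the chain
    (𝓕 : Filtration ℕ m0)
    (h𝓕 : ∀ n, 𝓕 n = ⨆ i ≤ n, MeasurableSpace.comap (X i) inferInstance)
    (x₀ : E) (φ : E → ℝ) (hφ0 : ∀ y, 0 ≤ φ y) (hφx₀ : φ x₀ = 0)
    (hharm : ∀ y, y ≠ x₀ → ∑' z, p y z * φ z = φ y)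
    -- `φ` is unbounded
    (hunb : ∀ C : ℝ, ∃ y, C < φ y)
    (r σ : ℝ) (hr0 : 0 < r) (hr1 : r < 1) (hσ0 : 0 < σ) (hσr : σ < 1 / r)
    (x : E)
    -- the measure `μ = μ_x^{(r)}` with density `ψ_r(X_n)·r^{L_{n-1}^{x₀}}` on `𝓕_n`
    (μ : Measure Ω)
    (hμ : ∀ (n : ℕ) (A : Set Ω), MeasurableSet[𝓕 n] A →
      μ A = ∫⁻ ω in A,
        ENNReal.ofReal
          ((r / (1 - r) * (∑' z, p x₀ z * φ z) + φ (X n ω)) *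
            r ^ ∑ m ∈ Finset.range n, (if X m ω = x₀ then (1 : ℕ) else 0)) ∂(ℙ x)) :
    (∀ n : ℕ, 1 ≤ n →
      ∫⁻ ω,
          ENNReal.ofReal
            (σ ^ ∑ m ∈ Finset.range n, (if X m ω = x₀ then (1 : ℕ) else 0)) ∂μ
        ≤ ENNReal.ofReal
            (max ((1 - σ * r) / (σ * (1 - r))) 1 *
              (σ * r / (1 - σ * r) * (∑' z, p x₀ z * φ z) + φ x))) ∧
    (∫⁻ ω,
        limsup
          (fun n : ℕ => ENNReal.ofReal
            (σ ^ ∑ m ∈ Finset.range n, (if X m ω = x₀ then (1 : ℕ) else 0)))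
          atTop ∂μ) < ⊤ ∧
    μ {ω | {m : ℕ | X m ω = x₀}.Infinite} = 0 := by
  have hS0 : 0 ≤ ∑' z, p x₀ z * φ z := tsum_nonneg fun z => mul_nonneg (hp0 _ _) (hφ0 _)
  have hr1' : (0:ℝ) < 1 - r := by linarith
  -- measurability of the local-time counter
  have hLmeas : ∀ n : ℕ,
      Measurable (fun ω => ∑ m ∈ Finset.range n, (if X m ω = x₀ then (1:ℕ) else 0)) := by
    intro n
    refine Finset.measurable_sum _ fun m _ => ?_
    exact Measurable.ite ((hXmeas m) (measurableSet_singleton x₀)) measurable_const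
      measurable_const
  have hmeas : ∀ (c τ : ℝ) (n : ℕ), Measurable fun ω =>
      ENNReal.ofReal ((c + φ (X n ω)) *
        τ ^ ∑ m ∈ Finset.range n, (if X m ω = x₀ then (1:ℕ) else 0)) := by
    intro c τ n
    refine ENNReal.measurable_ofReal.comp (Measurable.mul ?_ ?_)
    · exact measurable_const.add ((measurable_of_countable φ).comp (hXmeas n))
    · exact (measurable_of_countable (fun k : ℕ => τ ^ k)).comp (hLmeas n)
  have hpow : ∀ (τ : ℝ) (n : ℕ), Measurable fun ω =>
      ENNReal.ofReal (τ ^ ∑ m ∈ Finset.range n, (if X m ω = x₀ then (1:ℕ) else 0)) :=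
    fun τ n => ENNReal.measurable_ofReal.comp
      ((measurable_of_countable (fun k : ℕ => τ ^ k)).comp (hLmeas n))
  -- `𝓕 n`-measurability of the level sets of the counter
  have hA : ∀ (n k : ℕ), MeasurableSet[𝓕 n]
      {ω | (∑ m ∈ Finset.range n, (if X m ω = x₀ then (1:ℕ) else 0)) = k} := by
    intro n k
    have hXi : ∀ m, m < n → Measurable[𝓕 n] (X m) := by
      intro m hm
      have hle : MeasurableSpace.comap (X m) inferInstance ≤ 𝓕 n := by
        rw [h𝓕 n]
        exact le_iSup₂ (f := fun i (_ : i ≤ n) => MeasurableSpace.comap (X i) inferInstance)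
          m hm.le
      intro s hs
      exact hle _ ⟨s, hs, rfl⟩
    have : Measurable[𝓕 n]
        (fun ω => ∑ m ∈ Finset.range n, (if X m ω = x₀ then (1:ℕ) else 0)) := by
      refine Finset.measurable_sum _ fun m hm => ?_
      exact Measurable.ite ((hXi m (Finset.mem_range.1 hm)) (measurableSet_singleton x₀))
        measurable_const measurable_const
    exact this (measurableSet_singleton k)
  -- the main bound, for an arbitrary `τ ∈ (0, 1/r)`
  have bound : ∀ τ : ℝ, 0 < τ → τ < 1/r → ∀ n : ℕ,
      ∫⁻ ω, ENNReal.ofReal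
          (τ ^ ∑ m ∈ Finset.range n, (if X m ω = x₀ then (1:ℕ) else 0)) ∂μ
        ≤ ENNReal.ofReal (max ((1 - τ * r) / (τ * (1 - r))) 1 *
            (τ * r / (1 - τ * r) * (∑' z, p x₀ z * φ z) + φ x)) := by
    intro τ hτ0 hτr n
    have hτr1 : τ * r < 1 := (lt_div_iff₀ hr0).1 hτr
    have hτr1' : (0:ℝ) < 1 - τ * r := by linarith
    have hτr0 : 0 < τ * r := mul_pos hτ0 hr0
    have hC1 : (1:ℝ) ≤ max ((1 - τ * r) / (τ * (1 - r))) 1 := le_max_right _ _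
    have hC0 : (0:ℝ) ≤ max ((1 - τ * r) / (τ * (1 - r))) 1 := by linarith
    have hLlt : ∀ ω, (∑ m ∈ Finset.range n, (if X m ω = x₀ then (1:ℕ) else 0)) ∈
        Finset.range (n+1) := by
      intro ω
      rw [Finset.mem_range, Nat.lt_succ_iff]
      calc (∑ m ∈ Finset.range n, (if X m ω = x₀ then (1:ℕ) else 0))
          ≤ ∑ m ∈ Finset.range n, 1 :=
            Finset.sum_le_sum (fun m _ => by split_ifs <;> omega)
        _ = n := by simp
    calc ∫⁻ ω, ENNReal.ofReal
          (τ ^ ∑ m ∈ Finset.range n, (if X m ω = x₀ then (1:ℕ) else 0)) ∂μ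
        = ∑ k ∈ Finset.range (n+1), ENNReal.ofReal (τ ^ k) *
            μ {ω | (∑ m ∈ Finset.range n, (if X m ω = x₀ then (1:ℕ) else 0)) = k} := by
          rw [lintegral_congr (fun ω => ?_), lintegral_finset_sum _
            (fun k _ => measurable_const.indicator (𝓕.le n _ (hA n k)))]
          · exact Finset.sum_congr rfl fun k _ =>
              lintegral_indicator_const (𝓕.le n _ (hA n k)) _
          · show _ = ∑ k ∈ Finset.range (n+1), Set.indicator
              {ω' | (∑ m ∈ Finset.range n, (if X m ω' = x₀ then (1:ℕ) else 0)) = k}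
              (fun _ => ENNReal.ofReal (τ ^ k)) ω
            simp only [Set.indicator_apply, Set.mem_setOf_eq]
            rw [Finset.sum_ite_eq (Finset.range (n+1))
              (∑ m ∈ Finset.range n, (if X m ω = x₀ then (1:ℕ) else 0))
              (fun k => ENNReal.ofReal (τ ^ k)), if_pos (hLlt ω)]
      _ = ∑ k ∈ Finset.range (n+1),
            ∫⁻ ω in {ω | (∑ m ∈ Finset.range n, (if X m ω = x₀ then (1:ℕ) else 0)) = k},
              ENNReal.ofReal ((r / (1 - r) * (∑' z, p x₀ z * φ z) + φ (X n ω)) *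
                (τ * r) ^ ∑ m ∈ Finset.range n, (if X m ω = x₀ then (1:ℕ) else 0)) ∂(ℙ x) := by
          refine Finset.sum_congr rfl fun k _ => ?_
          rw [hμ n _ (hA n k), ← lintegral_const_mul _ (hmeas _ r n)]
          refine setLIntegral_congr_fun (𝓕.le n _ (hA n k)) (fun ω hω => ?_)
          have hk : (∑ m ∈ Finset.range n, (if X m ω = x₀ then (1:ℕ) else 0)) = k := hω
          rw [← hk, ← ENNReal.ofReal_mul (pow_nonneg hτ0.le _)]
          congr 1
          rw [mul_pow]
          ring
      _ = ∫⁻ ω, ENNReal.ofReal ((r / (1 - r) * (∑' z, p x₀ z * φ z) + φ (X n ω)) *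
            (τ * r) ^ ∑ m ∈ Finset.range n, (if X m ω = x₀ then (1:ℕ) else 0)) ∂(ℙ x) := by
          rw [Finset.sum_congr rfl (fun k _ =>
              (lintegral_indicator (𝓕.le n _ (hA n k)) _).symm),
            ← lintegral_finset_sum _
            (fun k _ => (hmeas _ (τ*r) n).indicator (𝓕.le n _ (hA n k)))]
          refine lintegral_congr fun ω => ?_
          simp only [Set.indicator_apply, Set.mem_setOf_eq]
          rw [Finset.sum_ite_eq (Finset.range (n+1))
            (∑ m ∈ Finset.range n, (if X m ω = x₀ then (1:ℕ) else 0)) _,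
            if_pos (hLlt ω)]
      _ ≤ ∫⁻ ω, ENNReal.ofReal (max ((1 - τ * r) / (τ * (1 - r))) 1) *
            ENNReal.ofReal ((τ * r / (1 - τ * r) * (∑' z, p x₀ z * φ z) + φ (X n ω)) *
              (τ * r) ^ ∑ m ∈ Finset.range n, (if X m ω = x₀ then (1:ℕ) else 0)) ∂(ℙ x) := by
          refine lintegral_mono fun ω => ?_
          rw [← ENNReal.ofReal_mul hC0]
          refine ENNReal.ofReal_le_ofReal ?_
          have ht : (0:ℝ) ≤ (τ * r) ^ ∑ m ∈ Finset.range n,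
              (if X m ω = x₀ then (1:ℕ) else 0) := pow_nonneg hτr0.le _
          have hy0 : 0 ≤ φ (X n ω) := hφ0 _
          have hmain : r / (1 - r) * (∑' z, p x₀ z * φ z) + φ (X n ω)
              ≤ max ((1 - τ * r) / (τ * (1 - r))) 1 *
                (τ * r / (1 - τ * r) * (∑' z, p x₀ z * φ z) + φ (X n ω)) := by
            have hCge : (1 - τ * r) / (τ * (1 - r)) ≤ max ((1 - τ * r) / (τ * (1 - r))) 1 :=
              le_max_left _ _
            have heq : (1 - τ * r) / (τ * (1 - r)) * (τ * r / (1 - τ * r)) = r / (1 - r) := by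
              field_simp
            have h1 : r / (1 - r) * (∑' z, p x₀ z * φ z)
                ≤ max ((1 - τ * r) / (τ * (1 - r))) 1 *
                  (τ * r / (1 - τ * r) * (∑' z, p x₀ z * φ z)) := by
              have hstep : r / (1 - r) ≤ max ((1 - τ * r) / (τ * (1 - r))) 1 *
                  (τ * r / (1 - τ * r)) := by
                rw [← heq]
                exact mul_le_mul_of_nonneg_right hCge
                  (div_nonneg hτr0.le hτr1'.le)
              calc r / (1 - r) * (∑' z, p x₀ z * φ z)
                  ≤ (max ((1 - τ * r) / (τ * (1 - r))) 1 * (τ * r / (1 - τ * r))) *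
                    (∑' z, p x₀ z * φ z) := mul_le_mul_of_nonneg_right hstep hS0
                _ = max ((1 - τ * r) / (τ * (1 - r))) 1 *
                    (τ * r / (1 - τ * r) * (∑' z, p x₀ z * φ z)) := by ring
            have h2 : φ (X n ω) ≤ max ((1 - τ * r) / (τ * (1 - r))) 1 * φ (X n ω) :=
              le_mul_of_one_le_left hy0 hC1
            rw [mul_add]
            exact add_le_add h1 h2
          calc (r / (1 - r) * (∑' z, p x₀ z * φ z) + φ (X n ω)) *
                (τ * r) ^ ∑ m ∈ Finset.range n, (if X m ω = x₀ then (1:ℕ) else 0)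
              ≤ (max ((1 - τ * r) / (τ * (1 - r))) 1 *
                  (τ * r / (1 - τ * r) * (∑' z, p x₀ z * φ z) + φ (X n ω))) *
                (τ * r) ^ ∑ m ∈ Finset.range n, (if X m ω = x₀ then (1:ℕ) else 0) :=
                mul_le_mul_of_nonneg_right hmain ht
            _ = _ := by ring
      _ = ENNReal.ofReal (max ((1 - τ * r) / (τ * (1 - r))) 1) *
            ENNReal.ofReal (τ * r / (1 - τ * r) * (∑' z, p x₀ z * φ z) + φ x) := by
          rw [lintegral_const_mul _ (hmeas _ (τ*r) n),
            mart X hXmeas (ℙ x) p hp0 hp1 hfin x (hchain x) x₀ φ hφ0 hφx₀ hharm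
              (τ * r) hτr0 hτr1 n]
      _ = ENNReal.ofReal (max ((1 - τ * r) / (τ * (1 - r))) 1 *
            (τ * r / (1 - τ * r) * (∑' z, p x₀ z * φ z) + φ x)) :=
          (ENNReal.ofReal_mul hC0).symm
  -- total mass of μ
  have hμuniv : μ Set.univ = ENNReal.ofReal (r / (1 - r) * (∑' z, p x₀ z * φ z) + φ x) := by
    rw [hμ 0 Set.univ MeasurableSet.univ, Measure.restrict_univ]
    simpa using mart X hXmeas (ℙ x) p hp0 hp1 hfin x (hchain x) x₀ φ hφ0 hφx₀ hharm
      r hr0 hr1 0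
  refine ⟨fun n _ => bound σ hσ0 hσr n, ?_, ?_⟩
  · -- integrability of the limsup
    by_cases hσ1 : σ ≤ 1
    · calc ∫⁻ ω, limsup (fun n : ℕ => ENNReal.ofReal
            (σ ^ ∑ m ∈ Finset.range n, (if X m ω = x₀ then (1:ℕ) else 0))) atTop ∂μ
          ≤ ∫⁻ _, 1 ∂μ := by
            refine lintegral_mono fun ω => ?_
            refine limsup_le_of_le ?_ (Eventually.of_forall fun n => ?_)
            · isBoundedDefault
            · exact ENNReal.ofReal_le_one.2 (pow_le_one₀ hσ0.le hσ1)
        _ = μ Set.univ := lintegral_one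
        _ < ⊤ := by rw [hμuniv]; exact ENNReal.ofReal_lt_top
    · push_neg at hσ1
      have hmono : Monotone fun (n : ℕ) (ω : Ω) => ENNReal.ofReal
          (σ ^ ∑ m ∈ Finset.range n, (if X m ω = x₀ then (1:ℕ) else 0)) := by
        intro a b hab
        intro ω
        refine ENNReal.ofReal_le_ofReal (pow_le_pow_right₀ hσ1.le ?_)
        exact Finset.sum_le_sum_of_subset (Finset.range_subset_range.2 hab)
      calc ∫⁻ ω, limsup (fun n : ℕ => ENNReal.ofReal
            (σ ^ ∑ m ∈ Finset.range n, (if X m ω = x₀ then (1:ℕ) else 0))) atTop ∂μ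
          ≤ ∫⁻ ω, ⨆ n : ℕ, ENNReal.ofReal
            (σ ^ ∑ m ∈ Finset.range n, (if X m ω = x₀ then (1:ℕ) else 0)) ∂μ := by
            refine lintegral_mono fun ω => ?_
            refine limsup_le_of_le ?_ (Eventually.of_forall fun n =>
              le_iSup (fun k : ℕ => ENNReal.ofReal
                (σ ^ ∑ m ∈ Finset.range k, (if X m ω = x₀ then (1:ℕ) else 0))) n)
            isBoundedDefault
        _ = ⨆ n : ℕ, ∫⁻ ω, ENNReal.ofReal
            (σ ^ ∑ m ∈ Finset.range n, (if X m ω = x₀ then (1:ℕ) else 0)) ∂μ :=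
            lintegral_iSup (fun n => hpow σ n) (fun a b hab ω => hmono hab ω)
        _ ≤ ENNReal.ofReal (max ((1 - σ * r) / (σ * (1 - r))) 1 *
            (σ * r / (1 - σ * r) * (∑' z, p x₀ z * φ z) + φ x)) :=
            iSup_le fun n => bound σ hσ0 hσr n
        _ < ⊤ := ENNReal.ofReal_lt_top
  · -- the local time is a.s. finite
    set τ : ℝ := (1 + 1/r)/2 with hτdef
    have h1r : 1 < 1/r := (one_lt_div hr0).2 hr1
    have hτ1 : 1 < τ := by rw [hτdef]; linarith
    have hτ0 : 0 < τ := by linarith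
    have hτr : τ < 1/r := by rw [hτdef]; linarith
    have hBint : (∫⁻ ω, ⨆ n : ℕ, ENNReal.ofReal
        (τ ^ ∑ m ∈ Finset.range n, (if X m ω = x₀ then (1:ℕ) else 0)) ∂μ) ≠ ⊤ := by
      have hmono : ∀ (a b : ℕ), a ≤ b → ∀ ω, ENNReal.ofReal
          (τ ^ ∑ m ∈ Finset.range a, (if X m ω = x₀ then (1:ℕ) else 0)) ≤
          ENNReal.ofReal
          (τ ^ ∑ m ∈ Finset.range b, (if X m ω = x₀ then (1:ℕ) else 0)) := by
        intro a b hab ω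
        refine ENNReal.ofReal_le_ofReal (pow_le_pow_right₀ hτ1.le ?_)
        exact Finset.sum_le_sum_of_subset (Finset.range_subset_range.2 hab)
      rw [lintegral_iSup (fun n => hpow τ n) (fun a b hab ω => hmono a b hab ω)]
      exact ne_top_of_le_ne_top ENNReal.ofReal_ne_top
        (iSup_le fun n => bound τ hτ0 hτr n)
    have hBmeas : Measurable fun ω => ⨆ n : ℕ, ENNReal.ofReal
        (τ ^ ∑ m ∈ Finset.range n, (if X m ω = x₀ then (1:ℕ) else 0)) :=
      Measurable.iSup fun n => hpow τ n
    have hae := ae_lt_top hBmeas hBint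
    refine measure_mono_null ?_ (ae_iff.1 hae)
    intro ω hinf
    simp only [Set.mem_setOf_eq, not_lt, top_le_iff]
    by_contra hBfin
    obtain ⟨k, hk⟩ := pow_unbounded_of_one_lt
      ((⨆ n : ℕ, ENNReal.ofReal
        (τ ^ ∑ m ∈ Finset.range n, (if X m ω = x₀ then (1:ℕ) else 0))).toReal) hτ1
    obtain ⟨t, htsub, htcard⟩ := Set.Infinite.exists_subset_card_eq hinf k
    have hle : k ≤ ∑ m ∈ Finset.range (t.sup id + 1), (if X m ω = x₀ then (1:ℕ) else 0) := by
      have hsubset : t ⊆ (Finset.range (t.sup id + 1)).filter (fun m => X m ω = x₀) := by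
        intro m hm
        rw [Finset.mem_filter, Finset.mem_range]
        exact ⟨Nat.lt_succ_of_le (Finset.le_sup (f := id) hm), htsub hm⟩
      calc k = t.card := htcard.symm
        _ ≤ ((Finset.range (t.sup id + 1)).filter (fun m => X m ω = x₀)).card :=
          Finset.card_le_card hsubset
        _ = ∑ m ∈ Finset.range (t.sup id + 1), (if X m ω = x₀ then (1:ℕ) else 0) := by
          rw [Finset.sum_boole]
          simp
    have hb : ENNReal.ofReal
        (τ ^ ∑ m ∈ Finset.range (t.sup id + 1), (if X m ω = x₀ then (1:ℕ) else 0))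
        ≤ ⨆ n : ℕ, ENNReal.ofReal
          (τ ^ ∑ m ∈ Finset.range n, (if X m ω = x₀ then (1:ℕ) else 0)) :=
      le_iSup (fun n : ℕ => ENNReal.ofReal
        (τ ^ ∑ m ∈ Finset.range n, (if X m ω = x₀ then (1:ℕ) else 0))) (t.sup id + 1)
    have htr := ENNReal.toReal_mono hBfin hb
    rw [ENNReal.toReal_ofReal (by positivity)] at htr
    have hpowle : τ ^ k ≤ τ ^ ∑ m ∈ Finset.range (t.sup id + 1),
        (if X m ω = x₀ then (1:ℕ) else 0) := pow_le_pow_right₀ hτ1.le hle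
    linarith
end
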